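/- arXiv:2202.02674 — 9 statements merged into one kernel-verified Lean document; each statement's English description precedes it below -/
import Mathlib

section
/- Suppose ℍ satisfies the minimum value property. Then a closed subspace V of ℍ is R₁ invariant if and only if the valuation homogeneous decomposition of V is R₁ inner and has the full projection property. -/
noncomputable section

/-- The valuation subspace series: `V_k = {h ∈ V : ord h ≥ k}`. -/
def valSub {H : Type*} (ord : H → ℕ∞) (V : Set H) (k : ℕ) : Set H :=
  {h | h ∈ V ∧ (k : ℕ∞) ≤ ord h}

/-- The valuation homogeneous components: `W_k`, the orthogonal complement of
`V_{k+1}` inside `V_k`. -/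
def valHom {H : Type*} [NormedAddCommGroup H] [InnerProductSpace ℂ H]
    (ord : H → ℕ∞) (V : Set H) (k : ℕ) : Set H :=
  {h | h ∈ valSub ord V k ∧ ∀ g ∈ valSub ord V (k + 1), (inner ℂ g h : ℂ) = 0}

/-- `V` is `R₁` invariant: `r • h ∈ V` for all `r` with `ord_R r ≥ 1` and `h ∈ V`. -/
def R1Invariant {R H : Type*} [SMul R H] (ordR : R → ℕ∞) (V : Set H) : Prop :=
  ∀ r : R, 1 ≤ ordR r → ∀ h ∈ V, r • h ∈ V

/-- The valuation homogeneous decomposition of `V` is `R₁` inner. -/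
def R1InnerDecomp {R H : Type*} [NormedAddCommGroup H] [InnerProductSpace ℂ H] [SMul R H]
    (ordR : R → ℕ∞) (ord : H → ℕ∞) (V : Set H) : Prop :=
  ∀ (k m : ℕ) (r : R), 1 ≤ ordR r → ∀ h ∈ valHom ord V k, ∀ g ∈ V,
    (m : ℕ∞) < ord (r • h - g) → ∀ w ∈ valHom ord V m, (inner ℂ w (r • h - g) : ℂ) = 0

/-- The valuation homogeneous decomposition of `V` has the full projection property,
where `P m` is the orthogonal projection of `ℍ` onto `H_m`. -/
def FullProjProp {R H : Type*} [NormedAddCommGroup H] [InnerProductSpace ℂ H] [SMul R H]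
    (ordR : R → ℕ∞) (ord : H → ℕ∞) (P : ℕ → H → H) (V : Set H) : Prop :=
  ∀ (k m : ℕ) (r : R), 1 ≤ ordR r → ∀ h ∈ valHom ord V k, ∀ g ∈ V,
    (m : ℕ∞) ≤ ord (r • h - g) → P m (r • h - g) ∈ P m '' valHom ord V m

/-- `P` is the orthogonal projection onto the (sub)space `S`:
`P h ∈ S` and `h - P h ⟂ S` for every `h`. -/
def IsOrthProjOnto {H : Type*} [NormedAddCommGroup H] [InnerProductSpace ℂ H]
    (S : Set H) (P : H → H) : Prop :=
  ∀ h : H, P h ∈ S ∧ ∀ y ∈ S, (inner ℂ y (h - P h) : ℂ) = 0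

/-- The minimum value property: for every nonzero `h`, `ord h` is the least `k`
with `P k h ≠ 0`, where `P k` is the orthogonal projection of `ℍ` onto `H_k`. -/
def MinValProp {H : Type*} [Zero H] (ord : H → ℕ∞) (P : ℕ → H → H) : Prop :=
  ∀ h : H, h ≠ 0 → ∃ k : ℕ, P k h ≠ 0 ∧ (∀ j < k, P j h = 0) ∧ ord h = (k : ℕ∞)

section AuxBeurling

lemma aux_le_limsup (f : ℕ → ℕ∞) (c : ℕ∞) (h : ∀ᶠ n in Filter.atTop, c ≤ f n) :
    c ≤ Filter.limsup f Filter.atTop := by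
  rw [Filter.limsup_eq]
  refine le_sInf fun a ha => ?_
  obtain ⟨n, h1, h2⟩ := (h.and ha).exists
  exact h1.trans h2

variable {H : Type*} [NormedAddCommGroup H] [InnerProductSpace ℂ H]

lemma aux_proj_eq {S : Set H} {P : H → H} (hP : IsOrthProjOnto S P)
    (hsub : ∀ a ∈ S, ∀ b ∈ S, a - b ∈ S) {x p : H} (hp : p ∈ S)
    (hperp : ∀ y ∈ S, (inner ℂ y (x - p) : ℂ) = 0) : P x = p := by
  obtain ⟨hPx, hPo⟩ := hP x
  have hd : P x - p ∈ S := hsub _ hPx _ hp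
  have h1 := hPo _ hd
  have h2 := hperp _ hd
  have h3 : (inner ℂ (P x - p) (P x - p) : ℂ) = 0 := by
    have e : (x - p) - (x - P x) = P x - p := by abel
    calc (inner ℂ (P x - p) (P x - p) : ℂ)
        = inner ℂ (P x - p) ((x - p) - (x - P x)) := by rw [e]
      _ = inner ℂ (P x - p) (x - p) - inner ℂ (P x - p) (x - P x) := inner_sub_right _ _ _
      _ = 0 := by rw [h1, h2, sub_zero]
  exact sub_eq_zero.mp (inner_self_eq_zero.mp h3)

lemma aux_proj_zero {S : Set H} {P : H → H} (hP : IsOrthProjOnto S P) : P 0 = 0 := by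
  obtain ⟨hPx, hPo⟩ := hP 0
  have h := hPo _ hPx
  rw [zero_sub, inner_neg_right, neg_eq_zero] at h
  exact inner_self_eq_zero.mp h

end AuxBeurling

/-- **Abstract Beurling's theorem.** Suppose `ℍ` satisfies the minimum value property.
Then a closed subspace `V` of `ℍ` is `R₁` invariant if and only if the valuation
homogeneous decomposition of `V` is `R₁` inner ℂ and has the full projection property. -/
theorem abstract_beurling
    {R H : Type*} [CommRing R] [Algebra ℂ R]
    [NormedAddCommGroup H] [InnerProductSpace ℂ H] [CompleteSpace H]
    [Module R H] [SMulCommClass ℂ R H] [IsScalarTower ℂ R H]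
    (ordR : R → ℕ∞) (ord : H → ℕ∞)
    (hordRunit : ∀ r : R, IsUnit r → ordR r = 0)
    (hordRtop : ∀ r : R, ordR r = ⊤ ↔ r = 0)
    (hordRmul : ∀ r s : R, ordR r + ordR s ≤ ordR (r * s))
    (hordRsmul : ∀ (c : ℂ) (r : R), c ≠ 0 → ordR (c • r) = ordR r)
    (hordRadd : ∀ r s : R, min (ordR r) (ordR s) ≤ ordR (r + s))
    (hordtop : ∀ h : H, ord h = ⊤ ↔ h = 0)
    (hordsmul : ∀ (r : R) (h : H), ordR r + ord h ≤ ord (r • h))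
    (hordc : ∀ (c : ℂ) (h : H), c ≠ 0 → ord (c • h) = ord h)
    (hordadd : ∀ h₁ h₂ : H, min (ord h₁) (ord h₂) ≤ ord (h₁ + h₂))
    (hordusc : ∀ (u : ℕ → H) (h : H), Filter.Tendsto u Filter.atTop (nhds h) →
      Filter.limsup (fun j => ord (u j)) Filter.atTop ≤ ord h)
    (hsmulcont : ∀ r : R, Continuous fun h : H => r • h)
    (P : ℕ → H → H)
    (hP : ∀ m : ℕ, IsOrthProjOnto (valHom ord (Set.univ : Set H) m) (P m))
    (hmin : MinValProp ord P)
    (V : Submodule ℂ H) (hVc : IsClosed (V : Set H)) :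
    R1Invariant ordR (V : Set H) ↔
      R1InnerDecomp ordR ord (V : Set H) ∧ FullProjProp ordR ord P (V : Set H) := by
  -- basic order facts
  have hord0 : ord (0 : H) = ⊤ := (hordtop 0).mpr rfl
  have hordneg : ∀ x : H, ord (-x) = ord x := by
    intro x
    have := hordc (-1) x (by norm_num)
    rwa [neg_one_smul] at this
  have hordsub : ∀ x y : H, min (ord x) (ord y) ≤ ord (x - y) := by
    intro x y
    have := hordadd x (-y)
    rwa [hordneg y, ← sub_eq_add_neg] at this
  -- the ambient homogeneous components are closed under subtraction
  have hSsub : ∀ m : ℕ, ∀ a ∈ valHom ord (Set.univ : Set H) m,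
      ∀ b ∈ valHom ord (Set.univ : Set H) m, a - b ∈ valHom ord (Set.univ : Set H) m := by
    intro m a ha b hb
    refine ⟨⟨Set.mem_univ _, le_trans (le_min ha.1.2 hb.1.2) (hordsub a b)⟩, fun g hg => ?_⟩
    rw [inner_sub_right, ha.2 g hg, hb.2 g hg, sub_zero]
  have hPzero : ∀ m, P m 0 = 0 := fun m => aux_proj_zero (hP m)
  have hPsub : ∀ (m : ℕ) (a b : H), P m (a - b) = P m a - P m b := by
    intro m a b
    refine aux_proj_eq (hP m) (hSsub m) (hSsub m _ (hP m a).1 _ (hP m b).1) (fun y hy => ?_)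
    have e : (a - b) - (P m a - P m b) = (a - P m a) - (b - P m b) := by abel
    rw [e, inner_sub_right, (hP m a).2 y hy, (hP m b).2 y hy, sub_zero]
  have hPadd : ∀ (m : ℕ) (a b : H), P m (a + b) = P m a + P m b := by
    intro m a b
    have h1 : P m (-b) = -P m b := by
      have := hPsub m 0 b
      rwa [zero_sub, hPzero, zero_sub] at this
    have := hPsub m a (-b)
    rwa [sub_neg_eq_add, h1, sub_neg_eq_add] at this
  have hPker : ∀ (m : ℕ) (x : H), (m : ℕ∞) < ord x → P m x = 0 := by
    intro m x hx
    by_cases h0 : x = 0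
    · rw [h0]; exact hPzero m
    · obtain ⟨k, -, hk2, hk3⟩ := hmin x h0
      exact hk2 m (by rwa [hk3, Nat.cast_lt] at hx)
  have hordge : ∀ (m : ℕ) (x : H), (∀ j ≤ m, P j x = 0) → ((m : ℕ∞) + 1) ≤ ord x := by
    intro m x hx
    by_cases h0 : x = 0
    · rw [h0, hord0]; exact le_top
    · obtain ⟨k, hk1, -, hk3⟩ := hmin x h0
      rw [hk3]
      have hmk : m < k := by
        by_contra hmk
        push_neg at hmk
        exact hk1 (hx k hmk)
      exact_mod_cast Nat.succ_le_of_lt hmk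
  -- the valuation subspaces as closed submodules
  let VS : ℕ → Submodule ℂ H := fun k =>
    { carrier := valSub ord (V : Set H) k
      add_mem' := fun {a b} ha hb =>
        ⟨V.add_mem ha.1 hb.1, le_trans (le_min ha.2 hb.2) (hordadd a b)⟩
      zero_mem' := ⟨V.zero_mem, by rw [hord0]; exact le_top⟩
      smul_mem' := by
        intro c x hx
        by_cases hc : c = 0
        · rw [hc, zero_smul]
          exact ⟨V.zero_mem, by rw [hord0]; exact le_top⟩
        · exact ⟨V.smul_mem c hx.1, by rw [hordc c x hc]; exact hx.2⟩ }
  have hVSmem : ∀ (k : ℕ) (x : H), x ∈ VS k ↔ x ∈ valSub ord (V : Set H) k := fun _ _ => Iff.rfl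
  have hVSc : ∀ k, IsClosed (VS k : Set H) := by
    intro k
    refine IsSeqClosed.isClosed ?_
    intro u x hu hux
    refine ⟨hVc.isSeqClosed (fun n => (hu n).1) hux, le_trans ?_ (hordusc u x hux)⟩
    exact aux_le_limsup _ _ (Filter.Eventually.of_forall fun n => (hu n).2)
  -- orthogonal decomposition inside V
  have decomp : ∀ (k : ℕ) (x : H), x ∈ V → (k : ℕ∞) ≤ ord x →
      ∃ w v : H, w ∈ valHom ord (V : Set H) k ∧ v ∈ valSub ord (V : Set H) (k + 1) ∧
        x = w + v := by
    intro k x hxV hxo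
    haveI : CompleteSpace (VS (k + 1)) := (hVSc (k + 1)).completeSpace_coe
    set v : H := (Submodule.orthogonalProjectionOnto (VS (k + 1)) x : H) with hv
    have hvmem : v ∈ valSub ord (V : Set H) (k + 1) := (Submodule.orthogonalProjectionOnto (VS (k + 1)) x).2
    refine ⟨x - v, v, ⟨⟨V.sub_mem hxV hvmem.1, ?_⟩, fun g hg => ?_⟩, hvmem, by abel⟩
    · refine le_trans (le_min hxo (le_trans ?_ hvmem.2)) (hordsub x v)
      exact_mod_cast Nat.le_succ k
    · exact inner_eq_zero_symm.mp ((VS (k + 1)).starProjection_inner_eq_zero x g hg)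
  constructor
  · -- forward direction
    intro hInv
    constructor
    · intro k m r hr h hh g hg hlt w hw
      have hx : r • h - g ∈ valSub ord (V : Set H) (m + 1) := by
        refine ⟨V.sub_mem (hInv r hr h hh.1.1) hg, ?_⟩
        have := Order.add_one_le_of_lt hlt
        exact_mod_cast this
      exact inner_eq_zero_symm.mp (hw.2 _ hx)
    · intro k m r hr h hh g hg hle
      have hxV : r • h - g ∈ V := V.sub_mem (hInv r hr h hh.1.1) hg
      obtain ⟨w, v, hw, hv, he⟩ := decomp m _ hxV hle
      refine ⟨w, hw, ?_⟩
      have hPv : P m v = 0 := by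
        refine hPker m v (lt_of_lt_of_le ?_ hv.2)
        exact_mod_cast Nat.lt_succ_self m
      rw [he, hPadd, hPv, add_zero]
  · -- reverse direction
    rintro ⟨hInner, hFull⟩ r hr x hxV
    -- the multiplication operator
    let L : H →L[ℂ] H :=
      { toFun := fun h => r • h
        map_add' := fun a b => smul_add r a b
        map_smul' := fun c h => (smul_comm r c h)
        cont := hsmulcont r }
    -- Step A: r • h ∈ V for every homogeneous h
    have key : ∀ (k : ℕ) (h : H), h ∈ valHom ord (V : Set H) k → r • h ∈ V := by
      intro k h hh
      by_cases hrh0 : r • h = 0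
      · rw [hrh0]; exact V.zero_mem
      set good : ℕ → H → Prop := fun m g => g ∈ V ∧ (m : ℕ∞) ≤ ord (r • h - g) with hgooddef
      have h0 : good 0 0 := ⟨V.zero_mem, by simp⟩
      have step : ∀ (m : ℕ) (g : H), good m g →
          ∃ w, w ∈ valHom ord (V : Set H) m ∧ good (m + 1) (g + w) := by
        intro m g hg
        obtain ⟨w, hw, hPw⟩ := hFull k m r hr h hh g hg.1 hg.2
        refine ⟨w, hw, V.add_mem hg.1 hw.1.1, ?_⟩
        have heq : r • h - (g + w) = (r • h - g) - w := by abel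
        rw [heq]
        have hvanish : ∀ j ≤ m, P j ((r • h - g) - w) = 0 := by
          intro j hj
          rw [hPsub]
          rcases lt_or_eq_of_le hj with hlt | heqj
          · rw [hPker j _ (lt_of_lt_of_le (Nat.cast_lt.mpr hlt) hg.2),
              hPker j w (lt_of_lt_of_le (Nat.cast_lt.mpr hlt) hw.1.2), sub_zero]
          · subst heqj
            rw [← hPw, sub_self]
        have := hordge m _ hvanish
        exact le_trans (by push_cast; exact le_rfl) this
      -- build the approximating sequence
      obtain ⟨g, hg0, hgood, hstep⟩ : ∃ g : ℕ → H, g 0 = 0 ∧ (∀ m, good m (g m)) ∧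
          ∀ m, g (m + 1) - g m ∈ valHom ord (V : Set H) m := by
        choose w hw1 hw2 using step
        let T : ∀ m : ℕ, {g : H // good m g} := fun m =>
          Nat.rec (motive := fun m => {g : H // good m g}) ⟨0, h0⟩
            (fun n p => ⟨p.1 + w n p.1 p.2, hw2 n p.1 p.2⟩) m
        refine ⟨fun m => (T m).1, rfl, fun m => (T m).2, fun m => ?_⟩
        show (T (m + 1)).1 - (T m).1 ∈ _
        have e : (T (m + 1)).1 = (T m).1 + w m (T m).1 (T m).2 := rfl
        rw [e, add_sub_cancel_left]
        exact hw1 m (T m).1 (T m).2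
      -- orthogonality
      have horth : ∀ m i, m ≤ i → (inner ℂ (g m) (r • h - g i) : ℂ) = 0 := by
        intro m
        induction m with
        | zero => intro i _; rw [hg0, inner_zero_left]
        | succ n ih =>
          intro i hi
          have e : g (n + 1) = g n + (g (n + 1) - g n) := by abel
          rw [e, inner_add_left, ih i (Nat.le_of_succ_le hi), zero_add]
          refine hInner k n r hr h hh (g i) (hgood i).1 ?_ _ (hstep n)
          exact lt_of_lt_of_le (Nat.cast_lt.mpr (lt_of_lt_of_le (Nat.lt_succ_self n) hi))
            (hgood i).2
      have horth2 : ∀ m i, m ≤ i → (inner ℂ (g m) (g i - g m) : ℂ) = 0 := by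
        intro m i hmi
        have e : g i - g m = (r • h - g m) - (r • h - g i) := by abel
        rw [e, inner_sub_right, horth m m le_rfl, horth m i hmi, sub_zero]
      have hbound : ∀ m, ‖g m‖ ≤ ‖r • h‖ := by
        intro m
        by_cases hgm0 : g m = 0
        · rw [hgm0, norm_zero]; exact norm_nonneg _
        · have hin : (inner ℂ (g m) (g m) : ℂ) = inner ℂ (g m) (r • h) := by
            have e : (r • h) = (r • h - g m) + g m := by abel
            rw [e, inner_add_right, horth m m le_rfl, zero_add]
          have h1 : ‖g m‖ ^ 2 = RCLike.re (inner ℂ (g m) (r • h) : ℂ) := by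
            rw [← hin, inner_self_eq_norm_sq]
          have h2 : RCLike.re (inner ℂ (g m) (r • h) : ℂ) ≤ ‖g m‖ * ‖r • h‖ :=
            re_inner_le_norm _ _
          have hpos : 0 < ‖g m‖ := norm_pos_iff.mpr hgm0
          nlinarith
      have hpyth : ∀ m i, m ≤ i → ‖g i‖ ^ 2 = ‖g m‖ ^ 2 + ‖g i - g m‖ ^ 2 := by
        intro m i hmi
        have h1 := norm_add_sq_eq_norm_sq_add_norm_sq_of_inner_eq_zero (g m) (g i - g m)
          (horth2 m i hmi)
        have e : g m + (g i - g m) = g i := by abel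
        rw [e] at h1
        rw [pow_two, pow_two, pow_two]
        exact h1
      have hcauchy : CauchySeq g := by
        have hmono : Monotone fun m => ‖g m‖ ^ 2 := by
          intro m i hmi
          have := hpyth m i hmi
          dsimp only
          nlinarith [sq_nonneg ‖g i - g m‖]
        have hbdd : BddAbove (Set.range fun m => ‖g m‖ ^ 2) := by
          refine ⟨‖r • h‖ ^ 2, ?_⟩
          rintro _ ⟨m, rfl⟩
          have h1 := hbound m
          have h2 := norm_nonneg (g m)
          dsimp only
          nlinarith
        have hcs : CauchySeq fun m => ‖g m‖ ^ 2 := (tendsto_atTop_ciSup hmono hbdd).cauchySeq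
        rw [Metric.cauchySeq_iff] at hcs ⊢
        intro ε hε
        obtain ⟨N, hN⟩ := hcs (ε ^ 2) (by positivity)
        refine ⟨N, fun m hm n hn => ?_⟩
        have key2 : ∀ a b, N ≤ a → N ≤ b → b ≤ a → dist (g a) (g b) < ε := by
          intro a b ha hb hba
          have h1 := hN a ha b hb
          rw [Real.dist_eq] at h1
          have h2 := hpyth b a hba
          have h3 : ‖g a - g b‖ ^ 2 < ε ^ 2 := by
            have e : ‖g a - g b‖ ^ 2 = ‖g a‖ ^ 2 - ‖g b‖ ^ 2 := by linarith
            rw [e]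
            calc ‖g a‖ ^ 2 - ‖g b‖ ^ 2 ≤ |‖g a‖ ^ 2 - ‖g b‖ ^ 2| := le_abs_self _
              _ < ε ^ 2 := h1
          rw [dist_eq_norm]
          exact lt_of_pow_lt_pow_left₀ 2 (le_of_lt hε) h3
        rcases le_total n m with hcmp | hcmp
        · exact key2 m n hm hn hcmp
        · rw [dist_comm]; exact key2 n m hn hm hcmp
      obtain ⟨l, hl⟩ := cauchySeq_tendsto_of_complete hcauchy
      have hlV : l ∈ V := hVc.isSeqClosed (fun n => (hgood n).1) hl
      have htend : Filter.Tendsto (fun m => r • h - g m) Filter.atTop (nhds (r • h - l)) :=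
        tendsto_const_nhds.sub hl
      have hordl : ord (r • h - l) = ⊤ := by
        refine top_le_iff.mp (le_trans ?_ (hordusc _ _ htend))
        rw [Filter.limsup_eq]
        refine le_sInf fun a ha => top_le_iff.mpr ?_
        by_contra hne
        obtain ⟨n, rfl⟩ := WithTop.ne_top_iff_exists.mp hne
        obtain ⟨m, h1, h2⟩ := (ha.and (Filter.eventually_ge_atTop (n + 1))).exists
        have h3 : ((n + 1 : ℕ) : ℕ∞) ≤ (n : ℕ∞) := by
          refine le_trans (le_trans ?_ (hgood m).2) h1
          exact_mod_cast h2
        exact absurd (by exact_mod_cast h3 : n + 1 ≤ n) (by omega)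
      have : r • h = l := sub_eq_zero.mp ((hordtop _).mp hordl)
      rw [this]; exact hlV
    -- Step B: the homogeneous pieces span a dense subspace of V
    let M : Submodule ℂ H :=
      (Submodule.span ℂ (⋃ k, valHom ord (V : Set H) k)).topologicalClosure
    have hMV : M ≤ V := by
      refine Submodule.topologicalClosure_minimal _ ?_ hVc
      rw [Submodule.span_le]
      exact Set.iUnion_subset fun k y hy => hy.1.1
    have hVM : (V : Set H) ⊆ (M : Set H) := by
      intro z hzV
      haveI : CompleteSpace M := (Submodule.isClosed_topologicalClosure _).completeSpace_coe
      set y : H := z - (Submodule.orthogonalProjectionOnto M z : H) with hy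
      have hyM : ∀ w ∈ M, (inner ℂ y w : ℂ) = 0 := fun w hw =>
        M.starProjection_inner_eq_zero z w hw
      have hyV : y ∈ V := V.sub_mem hzV (hMV (Submodule.orthogonalProjectionOnto M z).2)
      have hyk : ∀ k : ℕ, (k : ℕ∞) ≤ ord y := by
        intro k
        induction k with
        | zero => simp
        | succ n ih =>
          obtain ⟨w, v, hw, hv, he⟩ := decomp n y hyV ih
          have hwM : w ∈ M := Submodule.le_topologicalClosure _
            (Submodule.subset_span (Set.mem_iUnion.mpr ⟨n, hw⟩))
          have h1 := hyM w hwM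
          have h2 : (inner ℂ w w : ℂ) = 0 := by
            rw [he, inner_add_left, hw.2 v hv, add_zero] at h1
            exact inner_eq_zero_symm.mp h1
          have hw0 : w = 0 := inner_self_eq_zero.mp h2
          have hyv : y = v := by rw [he, hw0, zero_add]
          rw [hyv]
          exact_mod_cast hv.2
      have hy0 : y = 0 := by
        by_contra hy0
        obtain ⟨n, -, -, hn⟩ := hmin y hy0
        have := hyk (n + 1)
        rw [hn] at this
        exact absurd (by exact_mod_cast this : n + 1 ≤ n) (by omega)
      have : z = (Submodule.orthogonalProjectionOnto M z : H) := by rwa [sub_eq_zero] at hy0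
      rw [this]
      exact (Submodule.orthogonalProjectionOnto M z).2
    -- Conclusion
    have hcomap : M ≤ Submodule.comap (L : H →ₗ[ℂ] H) V := by
      refine Submodule.topologicalClosure_minimal _ ?_ ?_
      · rw [Submodule.span_le]
        refine Set.iUnion_subset fun k w hw => ?_
        exact key k w hw
      · exact hVc.preimage L.continuous
    exact hcomap (hVM hxV)

end
end

section
/- A closed subspace V of ℍ is R₁ invariant if and only if for every k ∈ ℕ and every r ∈ R₁ one has r•W_k ⊆ V. -/
noncomputable section

/-- A closed subspace `V` of `ℍ` is `R₁` invariant if and only if for every `k ∈ ℕ`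
and every `r ∈ R₁` one has `r • W_k ⊆ V`. -/
theorem r1Invariant_iff_smul_valHom_subset
    {R H : Type*} [CommRing R] [Algebra ℂ R]
    [NormedAddCommGroup H] [InnerProductSpace ℂ H] [CompleteSpace H]
    [Module R H] [SMulCommClass ℂ R H] [IsScalarTower ℂ R H]
    (ordR : R → ℕ∞) (ord : H → ℕ∞)
    (hordRunit : ∀ r : R, IsUnit r → ordR r = 0)
    (hordRtop : ∀ r : R, ordR r = ⊤ ↔ r = 0)
    (hordRmul : ∀ r s : R, ordR r + ordR s ≤ ordR (r * s))
    (hordRsmul : ∀ (c : ℂ) (r : R), c ≠ 0 → ordR (c • r) = ordR r)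
    (hordRadd : ∀ r s : R, min (ordR r) (ordR s) ≤ ordR (r + s))
    (hordtop : ∀ h : H, ord h = ⊤ ↔ h = 0)
    (hordsmul : ∀ (r : R) (h : H), ordR r + ord h ≤ ord (r • h))
    (hordc : ∀ (c : ℂ) (h : H), c ≠ 0 → ord (c • h) = ord h)
    (hordadd : ∀ h₁ h₂ : H, min (ord h₁) (ord h₂) ≤ ord (h₁ + h₂))
    (hordusc : ∀ (u : ℕ → H) (h : H), Filter.Tendsto u Filter.atTop (nhds h) →
      Filter.limsup (fun j => ord (u j)) Filter.atTop ≤ ord h)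
    (hsmulcont : ∀ r : R, Continuous fun h : H => r • h)
    (V : Submodule ℂ H) (hVc : IsClosed (V : Set H)) :
    R1Invariant ordR (V : Set H) ↔
      ∀ (k : ℕ) (r : R), 1 ≤ ordR r → ∀ h ∈ valHom ord (V : Set H) k,
        r • h ∈ (V : Set H) := by
  constructor
  · intro hinv k r hr h hh
    exact hinv r hr h hh.1.1
  · intro hw r hr h hV
    classical
    -- the valuation subspaces as closed submodules
    let Vk : ℕ → Submodule ℂ H := fun k =>
      { carrier := valSub ord (V : Set H) k
        add_mem' := by
          rintro a b ⟨haV, hak⟩ ⟨hbV, hbk⟩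
          exact ⟨V.add_mem haV hbV, le_trans (le_min hak hbk) (hordadd a b)⟩
        zero_mem' := ⟨V.zero_mem, by simp [(hordtop (0 : H)).2 rfl]⟩
        smul_mem' := by
          rintro c a ⟨haV, hak⟩
          refine ⟨V.smul_mem c haV, ?_⟩
          rcases eq_or_ne c 0 with rfl | hc
          · simp [(hordtop (0 : H)).2 rfl]
          · rw [hordc c a hc]; exact hak }
    have hVkclosed : ∀ k, IsClosed ((Vk k : Submodule ℂ H) : Set H) := by
      intro k
      have : IsSeqClosed ((Vk k : Submodule ℂ H) : Set H) := by
        intro u x hu hux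
        refine ⟨hVc.isSeqClosed (fun n => (hu n).1) hux, ?_⟩
        refine le_trans ?_ (hordusc u x hux)
        refine Filter.le_limsup_of_frequently_le ?_ (by isBoundedDefault)
        exact Filter.Frequently.of_forall (fun n => (hu n).2)
      exact this.isClosed
    haveI : ∀ k, CompleteSpace (Vk k) := fun k => (hVkclosed k).completeSpace_coe
    set S : Submodule ℂ H := Submodule.span ℂ (⋃ k, valHom ord (V : Set H) k) with hS
    have hSV : S ≤ V := by
      rw [hS, Submodule.span_le]
      rintro x hx
      obtain ⟨k, hk⟩ := Set.mem_iUnion.1 hx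
      exact hk.1.1
    -- key lemma: V ∩ Sᗮ = 0
    have hkey : ∀ x, x ∈ V → x ∈ Sᗮ → x = 0 := by
      intro x hxV hxO
      have hstep : ∀ k, x ∈ Vk k := by
        intro k
        induction k with
        | zero => exact ⟨hxV, by simp⟩
        | succ k ih =>
          obtain ⟨y, hy, z, hz, hxyz⟩ := (Vk (k + 1)).exists_add_mem_mem_orthogonal x
          have hyVk : y ∈ Vk k := ⟨hy.1, le_trans (by exact_mod_cast Nat.le_succ k) hy.2⟩
          have hzVk : z ∈ Vk k := by
            have : z = x - y := by rw [hxyz]; abel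
            rw [this]; exact (Vk k).sub_mem ih hyVk
          have hzW : z ∈ valHom ord (V : Set H) k := by
            refine ⟨hzVk, ?_⟩
            intro g hg
            exact (Submodule.mem_orthogonal _ z).1 hz g hg
          have hz0 : (inner ℂ z x : ℂ) = 0 :=
            (Submodule.mem_orthogonal S x).1 hxO z
              (Submodule.subset_span (Set.mem_iUnion.2 ⟨k, hzW⟩))
          have hzy : (inner ℂ z y : ℂ) = 0 := (Submodule.mem_orthogonal' _ z).1 hz y hy
          have hzz : (inner ℂ z z : ℂ) = 0 := by
            have := hz0
            rw [hxyz, inner_add_right, hzy, zero_add] at this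
            exact this
          have hz00 : z = 0 := inner_self_eq_zero.1 hzz
          rw [hxyz, hz00, add_zero]
          exact hy
      have hordx : ord x = ⊤ := by
        by_contra hne
        lift ord x to ℕ using hne with n hn
        have h1 := (hstep (n + 1)).2
        rw [← hn] at h1
        have : n + 1 ≤ n := by exact_mod_cast h1
        omega
      exact (hordtop x).1 hordx
    -- density: V ⊆ closure S
    have hdense : (V : Set H) ⊆ closure (S : Set H) := by
      intro x hx
      haveI : CompleteSpace S.topologicalClosure :=
        S.isClosed_topologicalClosure.completeSpace_coe
      obtain ⟨y, hy, z, hz, hxyz⟩ := S.topologicalClosure.exists_add_mem_mem_orthogonal x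
      have hzS : z ∈ Sᗮ := Submodule.orthogonal_le S.le_topologicalClosure hz
      have hcl : (S.topologicalClosure : Set H) ⊆ (V : Set H) := by
        rw [Submodule.topologicalClosure_coe]
        exact closure_minimal hSV hVc
      have hyV : y ∈ V := hcl hy
      have hzV : z ∈ V := by
        have : z = x - y := by rw [hxyz]; abel
        rw [this]; exact V.sub_mem hx hyV
      have hz0 : z = 0 := hkey z hzV hzS
      rw [hxyz, hz0, add_zero]
      rw [← Submodule.topologicalClosure_coe]
      exact hy
    -- r • S ⊆ V
    have hrS : ∀ s ∈ S, r • s ∈ V := by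
      intro s hs
      refine Submodule.span_induction ?_ ?_ ?_ ?_ hs
      · intro x hx
        obtain ⟨k, hk⟩ := Set.mem_iUnion.1 hx
        exact hw k r hr x hk
      · simp only [smul_zero]; exact V.zero_mem
      · intro a b _ _ ha hb
        rw [smul_add]; exact V.add_mem ha hb
      · intro c a _ ha
        rw [← smul_comm c r a]; exact V.smul_mem c ha
    have hC : IsClosed ((fun x : H => r • x) ⁻¹' (V : Set H)) :=
      hVc.preimage (hsmulcont r)
    have hsub : closure (S : Set H) ⊆ (fun x : H => r • x) ⁻¹' (V : Set H) :=
      closure_minimal (fun s hs => hrS s hs) hC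
    exact hsub (hdense hV)
end
end

section
/- Suppose ℍ satisfies the minimum value property, and suppose that either R₁ = R, or R has a unit 1 and R = {λ·1 : λ ∈ ℂ} ∪ R₁. Then a closed subspace V of ℍ is an R-submodule of ℍ (i.e., r•h ∈ V for all r ∈ R and h ∈ V) if and only if the valuation homogeneous decomposition of V is R₁ inner and has the full projection property. -/
noncomputable section

private def valSubmodule {H : Type*} [NormedAddCommGroup H] [InnerProductSpace ℂ H]
    (ord : H → ℕ∞) (V : Submodule ℂ H) (n : ℕ)
    (hord0 : ord 0 = ⊤)
    (hordc : ∀ (c : ℂ) (h : H), c ≠ 0 → ord (c • h) = ord h)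
    (hordadd : ∀ h₁ h₂ : H, min (ord h₁) (ord h₂) ≤ ord (h₁ + h₂)) : Submodule ℂ H where
  carrier := valSub ord (V : Set H) n
  add_mem' := fun {a b} ha hb =>
    ⟨V.add_mem ha.1 hb.1, le_trans (le_min ha.2 hb.2) (hordadd a b)⟩
  zero_mem' := ⟨V.zero_mem, by rw [hord0]; exact le_top⟩
  smul_mem' := fun c v hv => by
    by_cases hc : c = 0
    · subst hc
      rw [zero_smul]
      exact ⟨V.zero_mem, by rw [hord0]; exact le_top⟩
    · exact ⟨V.smul_mem c hv.1, by rw [hordc c v hc]; exact hv.2⟩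

private def smulPreimage {R H : Type*} [CommRing R] [NormedAddCommGroup H]
    [InnerProductSpace ℂ H] [Module R H] [SMulCommClass ℂ R H]
    (r : R) (V : Submodule ℂ H) : Submodule ℂ H where
  carrier := {v : H | r • v ∈ V}
  add_mem' := fun {a b} ha hb => by
    simp only [Set.mem_setOf_eq, smul_add] at *
    exact V.add_mem ha hb
  zero_mem' := by
    simp only [Set.mem_setOf_eq, smul_zero]
    exact V.zero_mem
  smul_mem' := fun c v hv => by
    simp only [Set.mem_setOf_eq] at *
    rw [← smul_comm]
    exact V.smul_mem c hv

theorem enat_eq_top_of_forall' (x : ℕ∞) (h : ∀ n : ℕ, (n:ℕ∞) ≤ x) : x = ⊤ := by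
  by_contra hx
  obtain ⟨m, hm⟩ := WithTop.ne_top_iff_exists.mp hx
  rw [← hm] at h
  exact absurd (Nat.cast_le.mp (h (m+1))) (by omega)

theorem le_limsup_nat' (f : ℕ → ℕ∞) (c : ℕ∞) (hc : ∀ n : ℕ, ∃ i, n ≤ i ∧ c ≤ f i) :
    c ≤ Filter.limsup f Filter.atTop := by
  rw [Filter.limsup_eq_iInf_iSup_of_nat]
  refine le_iInf fun n => ?_
  obtain ⟨i, hi, hci⟩ := hc n
  exact le_iSup₂_of_le i hi hci

/-- Suppose `ℍ` satisfies the minimum value property, and suppose that either `R₁ = R`,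
or `R` has a unit and `R = {λ·1 : λ ∈ ℂ} ∪ R₁`.  Then a closed subspace `V` of `ℍ` is an
`R`-submodule of `ℍ` if and only if the valuation homogeneous decomposition of `V` is
`R₁` inner and has the full projection property. -/
theorem abstract_beurling_submodule
    {R H : Type*} [CommRing R] [Algebra ℂ R]
    [NormedAddCommGroup H] [InnerProductSpace ℂ H] [CompleteSpace H]
    [Module R H] [SMulCommClass ℂ R H] [IsScalarTower ℂ R H]
    (ordR : R → ℕ∞) (ord : H → ℕ∞)
    (hordRunit : ∀ r : R, IsUnit r → ordR r = 0)
    (hordRtop : ∀ r : R, ordR r = ⊤ ↔ r = 0)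
    (hordRmul : ∀ r s : R, ordR r + ordR s ≤ ordR (r * s))
    (hordRsmul : ∀ (c : ℂ) (r : R), c ≠ 0 → ordR (c • r) = ordR r)
    (hordRadd : ∀ r s : R, min (ordR r) (ordR s) ≤ ordR (r + s))
    (hordtop : ∀ h : H, ord h = ⊤ ↔ h = 0)
    (hordsmul : ∀ (r : R) (h : H), ordR r + ord h ≤ ord (r • h))
    (hordc : ∀ (c : ℂ) (h : H), c ≠ 0 → ord (c • h) = ord h)
    (hordadd : ∀ h₁ h₂ : H, min (ord h₁) (ord h₂) ≤ ord (h₁ + h₂))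
    (hordusc : ∀ (u : ℕ → H) (h : H), Filter.Tendsto u Filter.atTop (nhds h) →
      Filter.limsup (fun j => ord (u j)) Filter.atTop ≤ ord h)
    (hsmulcont : ∀ r : R, Continuous fun h : H => r • h)
    (P : ℕ → H → H)
    (hP : ∀ m : ℕ, IsOrthProjOnto (valHom ord (Set.univ : Set H) m) (P m))
    (hmin : MinValProp ord P)
    (hR : (∀ r : R, 1 ≤ ordR r) ∨ (∀ r : R, (∃ c : ℂ, r = c • (1 : R)) ∨ 1 ≤ ordR r))
    (V : Submodule ℂ H) (hVc : IsClosed (V : Set H)) :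
    (∀ (r : R), ∀ h ∈ V, r • h ∈ (V : Set H)) ↔
      R1InnerDecomp ordR ord (V : Set H) ∧ FullProjProp ordR ord P (V : Set H) := by
  classical
  have hord0 : ord 0 = ⊤ := (hordtop 0).mpr rfl
  have hordneg : ∀ h : H, ord (-h) = ord h := fun h => by
    have := hordc (-1) h (by norm_num)
    rwa [neg_one_smul] at this
  have hordsub : ∀ h₁ h₂ : H, min (ord h₁) (ord h₂) ≤ ord (h₁ - h₂) := fun h₁ h₂ => by
    have := hordadd h₁ (-h₂)
    rwa [← sub_eq_add_neg, hordneg] at this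
  -- superlevel sets of ord are closed
  have ordClosed : ∀ n : ℕ, IsClosed {h : H | (n:ℕ∞) ≤ ord h} := by
    intro n
    apply IsSeqClosed.isClosed
    intro u p hu hup
    refine le_trans ?_ (hordusc u p hup)
    exact le_limsup_nat' _ _ (fun m => ⟨m, le_refl m, hu m⟩)
  -- V_n as closed submodules
  have VSmk : ∀ n : ℕ, ∃ K : Submodule ℂ H, (K : Set H) = valSub ord (V:Set H) n ∧
      IsClosed (K : Set H) := by
    intro n
    refine ⟨valSubmodule ord V n hord0 hordc hordadd, rfl, ?_⟩
    have e : (valSubmodule ord V n hord0 hordc hordadd : Set H)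
        = (V:Set H) ∩ {h : H | (n:ℕ∞) ≤ ord h} := rfl
    exact e ▸ hVc.inter (ordClosed n)
  -- properties of valHom univ
  have zeroHomU : ∀ m : ℕ, (0:H) ∈ valHom ord (Set.univ : Set H) m := by
    intro m
    exact ⟨⟨trivial, by rw [hord0]; exact le_top⟩, fun g _ => inner_zero_right g⟩
  have subHomU : ∀ (m : ℕ) (a b : H), a ∈ valHom ord (Set.univ : Set H) m →
      b ∈ valHom ord (Set.univ : Set H) m → a - b ∈ valHom ord (Set.univ : Set H) m := by
    intro m a b ha hb
    refine ⟨⟨trivial, le_trans (le_min ha.1.2 hb.1.2) (hordsub a b)⟩, fun g hg => ?_⟩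
    rw [inner_sub_right, ha.2 g hg, hb.2 g hg, sub_zero]
  -- uniqueness of orthogonal projections
  have Punique : ∀ (m : ℕ) (x p : H), p ∈ valHom ord (Set.univ:Set H) m →
      (∀ y ∈ valHom ord (Set.univ:Set H) m, (inner ℂ y (x - p) : ℂ) = 0) → P m x = p := by
    intro m x p hp horth
    have hq := (hP m x).1
    have hsubm := subHomU m _ _ hq hp
    have h1 : (inner ℂ (P m x - p) (x - p) : ℂ) = 0 := horth _ hsubm
    have h2 : (inner ℂ (P m x - p) (x - P m x) : ℂ) = 0 := (hP m x).2 _ hsubm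
    have h3 : (inner ℂ (P m x - p) (P m x - p) : ℂ) = 0 := by
      have e : P m x - p = (x - p) - (x - P m x) := by abel
      nth_rewrite 2 [e]
      rw [inner_sub_right, h1, h2, sub_zero]
    exact sub_eq_zero.mp (inner_self_eq_zero.mp h3)
  -- min value property consequence
  have ordSucc : ∀ (m : ℕ) (x : H), (m:ℕ∞) ≤ ord x → P m x = 0 →
      ((m+1:ℕ):ℕ∞) ≤ ord x := by
    intro m x hle hz
    by_cases hx : x = 0
    · rw [hx, hord0]; exact le_top
    · obtain ⟨k, hk1, hk2, hk3⟩ := hmin x hx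
      rw [hk3] at hle ⊢
      rw [Nat.cast_le] at hle ⊢
      rcases lt_or_eq_of_le hle with hlt | heq
      · omega
      · subst heq; exact absurd hz hk1
  -- decomposition lemma
  have decomp : ∀ (n : ℕ) (u : H), u ∈ V → (n:ℕ∞) ≤ ord u →
      ∃ w t : H, u = w + t ∧ w ∈ valHom ord (V:Set H) n ∧ t ∈ V ∧
        ((n+1:ℕ):ℕ∞) ≤ ord t := by
    intro n u huV hord
    obtain ⟨K, hKcar, hKcl⟩ := VSmk (n+1)
    haveI : CompleteSpace K := hKcl.completeSpace_coe
    set t : H := (K.orthogonalProjectionOnto u : H) with ht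
    have htm : t ∈ K := Submodule.coe_mem _
    have htm' : t ∈ valSub ord (V:Set H) (n+1) := by rw [← hKcar]; exact htm
    refine ⟨u - t, t, by abel, ⟨⟨V.sub_mem huV htm'.1, ?_⟩, ?_⟩, htm'.1, htm'.2⟩
    · refine le_trans (le_min hord (le_trans ?_ htm'.2)) (hordsub u t)
      exact Nat.cast_le.mpr (by omega)
    · intro g hg
      have hgK : g ∈ K := by
        have h2 : g ∈ (K : Set H) := by rw [hKcar]; exact hg
        exact h2
      exact (K.mem_orthogonal _).mp (K.sub_starProjection_mem_orthogonal u) g hgK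
  constructor
  · -- forward direction
    intro hsub
    constructor
    · intro k m r hr h hh g hg hlt w hw
      have hxV : r • h - g ∈ V := V.sub_mem (hsub r h hh.1.1) hg
      have hx2 : r • h - g ∈ valSub ord (V:Set H) (m+1) :=
        ⟨hxV, by push_cast; exact Order.add_one_le_of_lt hlt⟩
      exact inner_eq_zero_symm.mp (hw.2 _ hx2)
    · intro k m r hr h hh g hg hle
      have hxV : r • h - g ∈ V := V.sub_mem (hsub r h hh.1.1) hg
      obtain ⟨w, t, hwt, hwmem, htV, htord⟩ := decomp m (r • h - g) hxV hle
      refine ⟨w, hwmem, ?_⟩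
      refine (Punique m (r • h - g) (P m w) (hP m w).1 ?_).symm
      intro y hy
      have e : (r • h - g) - P m w = t + (w - P m w) := by rw [hwt]; abel
      rw [e, inner_add_right, (hP m w).2 y hy, add_zero]
      exact inner_eq_zero_symm.mp (hy.2 _ ⟨trivial, htord⟩)
  · -- reverse direction
    rintro ⟨hI, hF⟩
    -- Lemma A : r • h ∈ V for homogeneous h
    have lemA : ∀ (r : R), 1 ≤ ordR r → ∀ (k : ℕ) (h : H),
        h ∈ valHom ord (V:Set H) k → r • h ∈ (V:Set H) := by
      intro r hr k h hh
      have step : ∀ (n : ℕ) (g : H), g ∈ V → (n:ℕ∞) ≤ ord (r • h - g) →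
          ∃ g' : H, g' ∈ V ∧ ((n+1:ℕ):ℕ∞) ≤ ord (r • h - g') ∧
            g' - g ∈ valHom ord (V:Set H) n := by
        intro n g hg hle
        obtain ⟨w, hwmem, hweq⟩ := hF k n r hr h hh g hg hle
        refine ⟨g + w, V.add_mem hg hwmem.1.1, ?_, by simpa using hwmem⟩
        have hPz : P n (r • h - (g + w)) = 0 := by
          apply Punique n _ 0 (zeroHomU n)
          intro y hy
          have e : (r • h - (g + w)) - 0 =
              ((r • h - g) - P n (r • h - g)) - (w - P n w) := by
            rw [hweq]; abel
          rw [e, inner_sub_right, (hP n _).2 y hy, (hP n w).2 y hy, sub_zero]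
        have hge : (n:ℕ∞) ≤ ord (r • h - (g + w)) := by
          have hxw : r • h - (g + w) = (r • h - g) - w := by abel
          rw [hxw]
          exact le_trans (le_min hle hwmem.1.2) (hordsub _ _)
        exact ordSucc n _ hge hPz
      -- recursive construction
      let Gs : ∀ n : ℕ, {g : H // g ∈ V ∧ (n:ℕ∞) ≤ ord (r • h - g)} := fun n =>
        Nat.rec (motive := fun n => {g : H // g ∈ V ∧ (n:ℕ∞) ≤ ord (r • h - g)})
          ⟨0, V.zero_mem, by simp⟩
          (fun n ih => ⟨(step n ih.1 ih.2.1 ih.2.2).choose,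
            (step n ih.1 ih.2.1 ih.2.2).choose_spec.1,
            (step n ih.1 ih.2.1 ih.2.2).choose_spec.2.1⟩) n
      let g : ℕ → H := fun n => (Gs n).1
      have hgV : ∀ n : ℕ, g n ∈ V := fun n => (Gs n).2.1
      have hgord : ∀ n : ℕ, (n:ℕ∞) ≤ ord (r • h - g n) := fun n => (Gs n).2.2
      have hwmem : ∀ n : ℕ, g (n+1) - g n ∈ valHom ord (V:Set H) n := fun n =>
        (step n (Gs n).1 (Gs n).2.1 (Gs n).2.2).choose_spec.2.2
      have horthx : ∀ j n : ℕ, j < n → (inner ℂ (g (j+1) - g j) (r • h - g n) : ℂ) = 0 := by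
        intro j n hjn
        refine hI k j r hr h hh (g n) (hgV n) ?_ _ (hwmem j)
        exact lt_of_lt_of_le (Nat.cast_lt.mpr hjn) (hgord n)
      have hdiff : ∀ m n : ℕ, m ≤ n → g n - g m = ∑ i ∈ Finset.Ico m n, (g (i+1) - g i) := by
        intro m n hmn
        rw [Finset.sum_Ico_eq_sub _ hmn, Finset.sum_range_sub, Finset.sum_range_sub]
        abel
      have hxorth : ∀ m n : ℕ, m ≤ n → (inner ℂ (g n - g m) (r • h - g n) : ℂ) = 0 := by
        intro m n hmn
        rw [hdiff m n hmn, sum_inner]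
        exact Finset.sum_eq_zero fun i hi => horthx i n (Finset.mem_Ico.mp hi).2
      have hpyth : ∀ m n : ℕ, m ≤ n →
          ‖r • h - g m‖^2 = ‖g n - g m‖^2 + ‖r • h - g n‖^2 := by
        intro m n hmn
        have e : r • h - g m = (g n - g m) + (r • h - g n) := by abel
        have := norm_add_sq_eq_norm_sq_add_norm_sq_of_inner_eq_zero _ _ (hxorth m n hmn)
        rw [e, pow_two, pow_two, pow_two]
        exact this
      set a : ℕ → ℝ := fun n => ‖r • h - g n‖^2 with ha
      have haAnti : Antitone a := by
        intro m n hmn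
        have := hpyth m n hmn
        have h2 := sq_nonneg ‖g n - g m‖
        simp only [ha]
        nlinarith
      have haBdd : BddBelow (Set.range a) := by
        refine ⟨0, ?_⟩
        rintro x ⟨n, rfl⟩
        exact sq_nonneg _
      obtain ⟨l, hl⟩ : ∃ l, Filter.Tendsto a Filter.atTop (nhds l) :=
        ⟨_, tendsto_atTop_ciInf haAnti haBdd⟩
      have haC : CauchySeq a := hl.cauchySeq
      have hxC : CauchySeq (fun n => r • h - g n) := by
        rw [Metric.cauchySeq_iff']
        intro ε hε
        obtain ⟨N, hN⟩ := Metric.cauchySeq_iff'.mp haC (ε^2) (by positivity)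
        refine ⟨N, fun n hn => ?_⟩
        have h1 : ‖(r • h - g n) - (r • h - g N)‖^2 = a N - a n := by
          have e : (r • h - g n) - (r • h - g N) = -(g n - g N) := by abel
          rw [e, norm_neg]
          have := hpyth N n hn
          simp only [ha]
          linarith
        have h2 : a N - a n < ε^2 := by
          have := hN n hn
          rw [Real.dist_eq] at this
          have := abs_lt.mp this
          linarith [this.1, this.2]
        rw [dist_eq_norm]
        nlinarith [norm_nonneg ((r • h - g n) - (r • h - g N))]
      obtain ⟨y, hy⟩ := cauchySeq_tendsto_of_complete hxC
      have hytop : ord y = ⊤ := by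
        apply enat_eq_top_of_forall'
        intro n
        refine le_trans ?_ (hordusc _ y hy)
        refine le_limsup_nat' _ _ (fun m => ⟨max m n, le_max_left _ _, ?_⟩)
        exact le_trans (Nat.cast_le.mpr (le_max_right m n)) (hgord (max m n))
      have hy0 : y = 0 := (hordtop y).mp hytop
      have hgconv : Filter.Tendsto g Filter.atTop (nhds (r • h)) := by
        have h1 : Filter.Tendsto (fun n => r • h - (r • h - g n)) Filter.atTop
            (nhds (r • h - y)) := tendsto_const_nhds.sub hy
        simpa [hy0, sub_sub_cancel] using h1
      exact hVc.mem_of_tendsto hgconv (Filter.Eventually.of_forall hgV)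
    -- density argument
    have hdense : ∀ u ∈ V, ∀ (r : R), 1 ≤ ordR r → r • u ∈ (V:Set H) := by
      intro u huV r hr
      set S : Submodule ℂ H :=
        (Submodule.span ℂ (⋃ k, valHom ord (V:Set H) k)).topologicalClosure with hS
      have hSclosed : IsClosed (S:Set H) := Submodule.isClosed_topologicalClosure _
      have hUV : (⋃ k, valHom ord (V:Set H) k) ⊆ (V:Set H) := by
        intro x hx
        obtain ⟨_, ⟨k, rfl⟩, hxk⟩ := hx
        exact hxk.1.1
      have hSV : S ≤ V :=
        Submodule.topologicalClosure_minimal _ (Submodule.span_le.mpr hUV) hVc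
      have hWS : ∀ k, valHom ord (V:Set H) k ⊆ (S:Set H) := fun k x hx =>
        Submodule.le_topologicalClosure _
          (Submodule.subset_span (Set.mem_iUnion.mpr ⟨k, hx⟩))
      haveI : CompleteSpace S := hSclosed.completeSpace_coe
      set d : H := u - (S.orthogonalProjectionOnto u : H) with hd
      have hdV : d ∈ V := V.sub_mem huV (hSV (Submodule.coe_mem _))
      have hdorth : ∀ s ∈ S, (inner ℂ s d : ℂ) = 0 := fun s hs =>
        (S.mem_orthogonal _).mp (S.sub_starProjection_mem_orthogonal u) s hs
      have hdord : ∀ n : ℕ, (n:ℕ∞) ≤ ord d := by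
        intro n
        induction n with
        | zero => simp
        | succ n ih =>
          obtain ⟨w, t, hwt, hwm, htV, htord⟩ := decomp n d hdV ih
          have hw0 : w = 0 := by
            have h1 : (inner ℂ w d : ℂ) = 0 := hdorth w (hWS n hwm)
            have h2 : (inner ℂ w t : ℂ) = 0 :=
              inner_eq_zero_symm.mp (hwm.2 t ⟨htV, htord⟩)
            have h3 : (inner ℂ w w : ℂ) = 0 := by
              have e : w = d - t := by rw [hwt]; abel
              nth_rewrite 2 [e]
              rw [inner_sub_right, h1, h2, sub_zero]
            exact inner_self_eq_zero.mp h3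
          have hdt : d = t := by rw [hwt, hw0, zero_add]
          rw [hdt]
          exact_mod_cast htord
      have hd0 : d = 0 := (hordtop d).mp (enat_eq_top_of_forall' _ hdord)
      have huS : u ∈ S := by
        have : u = (S.orthogonalProjectionOnto u : H) := by
          have := sub_eq_zero.mp hd0
          exact this
        rw [this]
        exact Submodule.coe_mem _
      -- the closed submodule of v with r • v ∈ V
      have hM : ∀ v ∈ S, r • v ∈ (V:Set H) := by
        set M : Submodule ℂ H := smulPreimage r V with hMdef
        have hMclosed : IsClosed (M:Set H) := hVc.preimage (hsmulcont r)
        have hUM : (⋃ k, valHom ord (V:Set H) k) ⊆ (M:Set H) := by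
          intro x hx
          obtain ⟨_, ⟨k, rfl⟩, hxk⟩ := hx
          exact lemA r hr k x hxk
        have hSM : S ≤ M :=
          Submodule.topologicalClosure_minimal _ (Submodule.span_le.mpr hUM) hMclosed
        exact fun v hv => hSM hv
      exact hM u huS
    intro r h hhV
    rcases hR with hR1 | hR1
    · exact hdense h hhV r (hR1 r)
    · rcases hR1 r with ⟨c, rfl⟩ | hr
      · have e : (c • (1:R)) • h = c • h := by rw [smul_assoc, one_smul]
        rw [e]
        exact V.smul_mem c hhV
      · exact hdense h hhV r hr
end
end

section
/- (Second projection lemma.) Suppose the valuation homogeneous decomposition of the closed subspace V is R₁ inner. Let r ∈ R₁, k ∈ ℕ, h ∈ W_k, and let g_j ∈ W_j for every j ∈ ℕ; set f_m = g_0 + g_1 + ⋯ + g_m. If ord(r•h − f_m) > m for every m ∈ ℕ, then the series Σ_j g_j converges in norm to an element f ∈ V, and r•h = f. -/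
noncomputable section

/-- Norm squared of a finite sum of pairwise orthogonal vectors. -/
lemma norm_sq_sum_of_orth {H : Type*} [NormedAddCommGroup H] [InnerProductSpace ℂ H]
    (g : ℕ → H) (s : Finset ℕ)
    (horth : ∀ i ∈ s, ∀ j ∈ s, i ≠ j → (inner ℂ (g i) (g j) : ℂ) = 0) :
    ‖∑ j ∈ s, g j‖ ^ 2 = ∑ j ∈ s, ‖g j‖ ^ 2 := by
  have h1 : (inner ℂ (∑ i ∈ s, g i) (∑ j ∈ s, g j) : ℂ)
      = ∑ i ∈ s, (inner ℂ (g i) (g i) : ℂ) := by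
    rw [sum_inner]
    refine Finset.sum_congr rfl fun i hi => ?_
    rw [inner_sum]
    exact Finset.sum_eq_single_of_mem i hi fun j hj hne => horth i hi j hj (Ne.symm hne)
  calc ‖∑ j ∈ s, g j‖ ^ 2
      = RCLike.re (inner ℂ (∑ i ∈ s, g i) (∑ j ∈ s, g j) : ℂ) :=
        (inner_self_eq_norm_sq _).symm
    _ = ∑ i ∈ s, RCLike.re (inner ℂ (g i) (g i) : ℂ) := by rw [h1, map_sum]
    _ = ∑ i ∈ s, ‖g i‖ ^ 2 := Finset.sum_congr rfl fun i _ => inner_self_eq_norm_sq _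

/-- **Second projection lemma.** Suppose the valuation homogeneous decomposition of the
closed subspace `V` is `R₁` inner.  If `g j ∈ W_j` for every `j` and
`ord (r • h - (g 0 + ⋯ + g m)) > m` for every `m`, then the series `Σ g j` converges in
norm to an element `f ∈ V` and `r • h = f`. -/
theorem second_projection_lemma
    {R H : Type*} [CommRing R] [Algebra ℂ R]
    [NormedAddCommGroup H] [InnerProductSpace ℂ H] [CompleteSpace H]
    [Module R H] [SMulCommClass ℂ R H] [IsScalarTower ℂ R H]
    (ordR : R → ℕ∞) (ord : H → ℕ∞)
    (hordRunit : ∀ r : R, IsUnit r → ordR r = 0)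
    (hordRtop : ∀ r : R, ordR r = ⊤ ↔ r = 0)
    (hordRmul : ∀ r s : R, ordR r + ordR s ≤ ordR (r * s))
    (hordRsmul : ∀ (c : ℂ) (r : R), c ≠ 0 → ordR (c • r) = ordR r)
    (hordRadd : ∀ r s : R, min (ordR r) (ordR s) ≤ ordR (r + s))
    (hordtop : ∀ h : H, ord h = ⊤ ↔ h = 0)
    (hordsmul : ∀ (r : R) (h : H), ordR r + ord h ≤ ord (r • h))
    (hordc : ∀ (c : ℂ) (h : H), c ≠ 0 → ord (c • h) = ord h)
    (hordadd : ∀ h₁ h₂ : H, min (ord h₁) (ord h₂) ≤ ord (h₁ + h₂))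
    (hordusc : ∀ (u : ℕ → H) (h : H), Filter.Tendsto u Filter.atTop (nhds h) →
      Filter.limsup (fun j => ord (u j)) Filter.atTop ≤ ord h)
    (hsmulcont : ∀ r : R, Continuous fun h : H => r • h)
    (V : Submodule ℂ H) (hVc : IsClosed (V : Set H))
    (hinner : R1InnerDecomp ordR ord (V : Set H))
    (r : R) (hr : 1 ≤ ordR r) (k : ℕ)
    (h : H) (hh : h ∈ valHom ord (V : Set H) k)
    (g : ℕ → H) (hg : ∀ j : ℕ, g j ∈ valHom ord (V : Set H) j)
    (hord : ∀ m : ℕ, (m : ℕ∞) < ord (r • h - ∑ j ∈ Finset.range (m + 1), g j)) :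
    ∃ f ∈ (V : Set H),
      Filter.Tendsto (fun m : ℕ => ∑ j ∈ Finset.range (m + 1), g j)
        Filter.atTop (nhds f) ∧ r • h = f := by
  classical
  set S : ℕ → H := fun m => ∑ j ∈ Finset.range (m + 1), g j with hS
  have hgV : ∀ j, g j ∈ (V : Set H) := fun j => (hg j).1.1
  have hSV : ∀ m, S m ∈ (V : Set H) := fun m => by
    exact Submodule.sum_mem V fun j _ => hgV j
  -- pairwise orthogonality of the g j
  have horth : ∀ i j : ℕ, i ≠ j → (inner ℂ (g i) (g j) : ℂ) = 0 := by
    have key : ∀ i j : ℕ, i < j → (inner ℂ (g j) (g i) : ℂ) = 0 := by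
      intro i j hij
      refine (hg i).2 (g j) ⟨hgV j, ?_⟩
      calc ((i + 1 : ℕ) : ℕ∞) ≤ (j : ℕ∞) := by exact_mod_cast hij
        _ ≤ ord (g j) := (hg j).1.2
    intro i j hij
    rcases lt_or_gt_of_ne hij with hlt | hgt
    · rw [← inner_conj_symm, key i j hlt, map_zero]
    · exact key j i hgt
  -- g j orthogonal to the defect d m for j ≤ m
  have hdorth : ∀ m j : ℕ, j ≤ m → (inner ℂ (g j) (r • h - S m) : ℂ) = 0 := by
    intro m j hjm
    refine hinner k j r hr h hh (S m) (hSV m) ?_ (g j) (hg j)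
    calc (j : ℕ∞) ≤ (m : ℕ∞) := by exact_mod_cast hjm
      _ < ord (r • h - S m) := hord m
  -- norm bound on partial sums
  have hbound : ∀ m : ℕ, ∑ j ∈ Finset.range (m + 1), ‖g j‖ ^ 2 ≤ ‖r • h‖ ^ 2 := by
    intro m
    have hSd : (inner ℂ (r • h - S m) (S m) : ℂ) = 0 := by
      rw [← inner_conj_symm]
      have : (inner ℂ (S m) (r • h - S m) : ℂ) = 0 := by
        rw [hS]
        simp only
        rw [sum_inner]
        refine Finset.sum_eq_zero fun j hj => ?_
        exact hdorth m j (Nat.lt_succ_iff.mp (Finset.mem_range.mp hj))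
      rw [this, map_zero]
    have hdecomp : r • h = (r • h - S m) + S m := by abel
    have hnorm : ‖r • h‖ ^ 2 = ‖r • h - S m‖ ^ 2 + ‖S m‖ ^ 2 := by
      rw [hdecomp, @norm_add_sq ℂ, hSd]
      simp
    have hSnorm : ‖S m‖ ^ 2 = ∑ j ∈ Finset.range (m + 1), ‖g j‖ ^ 2 :=
      norm_sq_sum_of_orth g _ (fun i _ j _ hij => horth i j hij)
    nlinarith [sq_nonneg ‖r • h - S m‖]
  -- summability of the squared norms
  have hsum : Summable fun j => ‖g j‖ ^ 2 := by
    apply summable_of_sum_range_le (c := ‖r • h‖ ^ 2) (fun j => sq_nonneg _)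
    intro n
    match n with
    | 0 => simp [sq_nonneg]
    | Nat.succ m => exact hbound m
  -- Cauchy sequence
  have hcauchy : CauchySeq S := by
    have ht : CauchySeq (fun n => ∑ j ∈ Finset.range n, ‖g j‖ ^ 2) :=
      hsum.hasSum.tendsto_sum_nat.cauchySeq
    rw [Metric.cauchySeq_iff] at ht ⊢
    intro ε hε
    obtain ⟨N, hN⟩ := ht (ε ^ 2) (by positivity)
    refine ⟨N, fun m hm n hn => ?_⟩
    have key : ∀ a b : ℕ, b ≤ a → ‖S a - S b‖ ^ 2
        = (∑ j ∈ Finset.range (a + 1), ‖g j‖ ^ 2) - ∑ j ∈ Finset.range (b + 1), ‖g j‖ ^ 2 := by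
      intro a b hba
      have hsub : Finset.range (b + 1) ⊆ Finset.range (a + 1) :=
        Finset.range_subset_range.mpr (by omega)
      have : S a - S b = ∑ j ∈ Finset.range (a + 1) \ Finset.range (b + 1), g j :=
        (Finset.sum_sdiff_eq_sub hsub).symm
      rw [this, norm_sq_sum_of_orth g _ (fun i _ j _ hij => horth i j hij),
        Finset.sum_sdiff_eq_sub hsub]
    have hdist : dist (S m) (S n) ^ 2 < ε ^ 2 := by
      rcases le_total n m with hnm | hmn
      · have h1 := hN (m + 1) (by omega) (n + 1) (by omega)
        rw [dist_eq_norm, key m n hnm]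
        calc (∑ j ∈ Finset.range (m + 1), ‖g j‖ ^ 2) - ∑ j ∈ Finset.range (n + 1), ‖g j‖ ^ 2
            ≤ |(∑ j ∈ Finset.range (m + 1), ‖g j‖ ^ 2) - ∑ j ∈ Finset.range (n + 1), ‖g j‖ ^ 2| :=
              le_abs_self _
          _ < ε ^ 2 := by rw [← Real.dist_eq]; exact h1
      · have h1 := hN (n + 1) (by omega) (m + 1) (by omega)
        rw [dist_eq_norm, ← norm_neg, neg_sub, key n m hmn]
        calc (∑ j ∈ Finset.range (n + 1), ‖g j‖ ^ 2) - ∑ j ∈ Finset.range (m + 1), ‖g j‖ ^ 2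
            ≤ |(∑ j ∈ Finset.range (n + 1), ‖g j‖ ^ 2) - ∑ j ∈ Finset.range (m + 1), ‖g j‖ ^ 2| :=
              le_abs_self _
          _ < ε ^ 2 := by rw [← Real.dist_eq]; exact h1
    nlinarith [dist_nonneg (x := S m) (y := S n), hε]
  obtain ⟨f, hf⟩ := cauchySeq_tendsto_of_complete hcauchy
  have hfV : f ∈ (V : Set H) := hVc.mem_of_tendsto hf (Filter.Eventually.of_forall hSV)
  refine ⟨f, hfV, hf, ?_⟩
  have hd : Filter.Tendsto (fun m => r • h - S m) Filter.atTop (nhds (r • h - f)) :=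
    Filter.Tendsto.const_sub _ hf
  have hlim : (⊤ : ℕ∞) ≤ Filter.limsup (fun m => ord (r • h - S m)) Filter.atTop := by
    by_contra hcon
    push_neg at hcon
    obtain ⟨n, hn⟩ : ∃ n : ℕ, Filter.limsup (fun m => ord (r • h - S m)) Filter.atTop = (n : ℕ∞) := by
      have := hcon.ne
      lift Filter.limsup (fun m => ord (r • h - S m)) Filter.atTop to ℕ using this with n hn
      exact ⟨n, rfl⟩
    have hge : ((n + 1 : ℕ) : ℕ∞) ≤ Filter.limsup (fun m => ord (r • h - S m)) Filter.atTop := by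
      apply Filter.le_limsup_of_frequently_le'
      apply Filter.Eventually.frequently
      filter_upwards [Filter.eventually_ge_atTop n] with m hm
      calc ((n + 1 : ℕ) : ℕ∞) ≤ ((m + 1 : ℕ) : ℕ∞) := by exact_mod_cast Nat.succ_le_succ hm
        _ ≤ ord (r • h - S m) := Order.add_one_le_of_lt (hord m)
    rw [hn] at hge
    exact absurd hge (by exact_mod_cast Nat.not_succ_le_self n)
  have : ord (r • h - f) = ⊤ := le_antisymm le_top (le_trans hlim (hordusc _ _ hd))
  exact sub_eq_zero.mp ((hordtop _).mp this)
end
end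

section
/- (Third projection lemma.) Suppose ℍ satisfies the minimum value property. Let W ≠ {0} be a closed subspace of ℍ on which ord is constant on W ∖ {0}, with common value m ∈ ℕ. Then the restriction of P_m^ℍ to W is a bounded linear map from W into H_m with trivial kernel (i.e., it is injective). -/
noncomputable section

/-- **Third projection lemma.** Suppose `ℍ` satisfies the minimum value property.  If
`W ≠ {0}` is a closed subspace of `ℍ` on which `ord` is constant, with common value `m`,
on `W \ {0}`, then the restriction to `W` of the orthogonal projection `P m` (a bounded
linear map) maps `W` into `H_m` and is injective. -/
theorem third_projection_lemma
    {R H : Type*} [CommRing R] [Algebra ℂ R]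
    [NormedAddCommGroup H] [InnerProductSpace ℂ H] [CompleteSpace H]
    [Module R H] [SMulCommClass ℂ R H] [IsScalarTower ℂ R H]
    (ordR : R → ℕ∞) (ord : H → ℕ∞)
    (hordRunit : ∀ r : R, IsUnit r → ordR r = 0)
    (hordRtop : ∀ r : R, ordR r = ⊤ ↔ r = 0)
    (hordRmul : ∀ r s : R, ordR r + ordR s ≤ ordR (r * s))
    (hordRsmul : ∀ (c : ℂ) (r : R), c ≠ 0 → ordR (c • r) = ordR r)
    (hordRadd : ∀ r s : R, min (ordR r) (ordR s) ≤ ordR (r + s))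
    (hordtop : ∀ h : H, ord h = ⊤ ↔ h = 0)
    (hordsmul : ∀ (r : R) (h : H), ordR r + ord h ≤ ord (r • h))
    (hordc : ∀ (c : ℂ) (h : H), c ≠ 0 → ord (c • h) = ord h)
    (hordadd : ∀ h₁ h₂ : H, min (ord h₁) (ord h₂) ≤ ord (h₁ + h₂))
    (hordusc : ∀ (u : ℕ → H) (h : H), Filter.Tendsto u Filter.atTop (nhds h) →
      Filter.limsup (fun j => ord (u j)) Filter.atTop ≤ ord h)
    (hsmulcont : ∀ r : R, Continuous fun h : H => r • h)
    (P : ℕ → H →L[ℂ] H)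
    (hP : ∀ m : ℕ, IsOrthProjOnto (valHom ord (Set.univ : Set H) m) (P m))
    (hmin : MinValProp ord fun m => ⇑(P m))
    (W : Submodule ℂ H) (hWc : IsClosed (W : Set H)) (hW : W ≠ ⊥)
    (m : ℕ) (hWm : ∀ h ∈ W, h ≠ 0 → ord h = (m : ℕ∞)) :
    (∀ h ∈ W, P m h ∈ valHom ord (Set.univ : Set H) m) ∧
      Set.InjOn (⇑(P m)) (W : Set H) := by
  constructor
  · intro h _
    exact (hP m h).1
  · intro h₁ h₁W h₂ h₂W hEq
    by_contra hne
    have hmem : h₁ - h₂ ∈ W := W.sub_mem h₁W h₂W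
    have hne' : h₁ - h₂ ≠ 0 := sub_ne_zero.mpr hne
    obtain ⟨k, hk0, _, hkord⟩ := hmin (h₁ - h₂) hne'
    have : ord (h₁ - h₂) = (m : ℕ∞) := hWm _ hmem hne'
    have hkm : k = m := by
      have := hkord ▸ this
      exact_mod_cast this
    apply hk0
    rw [hkm]
    simp [map_sub, hEq]
end
end

section
/- If V is a closed R₁ invariant subspace of ℍ, then the valuation homogeneous decomposition of V has the full projection property. -/
noncomputable section

/-- If `V` is a closed `R₁` invariant subspace of `ℍ`, then the valuation homogeneous
decomposition of `V` has the full projection property. -/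
theorem r1Invariant_implies_fullProj
    {R H : Type*} [CommRing R] [Algebra ℂ R]
    [NormedAddCommGroup H] [InnerProductSpace ℂ H] [CompleteSpace H]
    [Module R H] [SMulCommClass ℂ R H] [IsScalarTower ℂ R H]
    (ordR : R → ℕ∞) (ord : H → ℕ∞)
    (hordRunit : ∀ r : R, IsUnit r → ordR r = 0)
    (hordRtop : ∀ r : R, ordR r = ⊤ ↔ r = 0)
    (hordRmul : ∀ r s : R, ordR r + ordR s ≤ ordR (r * s))
    (hordRsmul : ∀ (c : ℂ) (r : R), c ≠ 0 → ordR (c • r) = ordR r)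
    (hordRadd : ∀ r s : R, min (ordR r) (ordR s) ≤ ordR (r + s))
    (hordtop : ∀ h : H, ord h = ⊤ ↔ h = 0)
    (hordsmul : ∀ (r : R) (h : H), ordR r + ord h ≤ ord (r • h))
    (hordc : ∀ (c : ℂ) (h : H), c ≠ 0 → ord (c • h) = ord h)
    (hordadd : ∀ h₁ h₂ : H, min (ord h₁) (ord h₂) ≤ ord (h₁ + h₂))
    (hordusc : ∀ (u : ℕ → H) (h : H), Filter.Tendsto u Filter.atTop (nhds h) →
      Filter.limsup (fun j => ord (u j)) Filter.atTop ≤ ord h)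
    (hsmulcont : ∀ r : R, Continuous fun h : H => r • h)
    (P : ℕ → H → H)
    (hP : ∀ m : ℕ, IsOrthProjOnto (valHom ord (Set.univ : Set H) m) (P m))
    (V : Submodule ℂ H) (hVc : IsClosed (V : Set H))
    (hinv : R1Invariant ordR (V : Set H)) :
    FullProjProp ordR ord P (V : Set H) := by
  intro k m r hr h hh g hg hordu
  set u : H := r • h - g with hu_def
  have hhV : h ∈ V := hh.1.1
  have huV : u ∈ V := V.sub_mem (hinv r hr h hhV) hg
  -- basic order lemmas
  have hord0 : ord (0 : H) = ⊤ := (hordtop 0).mpr rfl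
  have hordneg : ∀ x : H, ord (-x) = ord x := by
    intro x
    have := hordc (-1 : ℂ) x (by norm_num)
    simpa using this
  have hordsub : ∀ x y : H, min (ord x) (ord y) ≤ ord (x - y) := by
    intro x y
    have := hordadd x (-y)
    rw [hordneg] at this
    simpa [sub_eq_add_neg] using this
  -- level sets of ord are closed
  have hlevel : ∀ n : ℕ, IsClosed {x : H | (n : ℕ∞) ≤ ord x} := by
    intro n
    have hseq : IsSeqClosed {x : H | (n : ℕ∞) ≤ ord x} := by
      intro useq x hmem hlim
      have husc := hordusc useq x hlim
      refine le_trans ?_ husc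
      refine Filter.le_limsup_of_frequently_le ?_ (by isBoundedDefault)
      exact Filter.Frequently.of_forall (fun j => hmem j)
    exact hseq.isClosed
  -- the closed submodule V_{m+1}
  let K : Submodule ℂ H :=
    { carrier := {x | x ∈ V ∧ ((m + 1 : ℕ) : ℕ∞) ≤ ord x}
      add_mem' := fun {a b} ha hb =>
        ⟨V.add_mem ha.1 hb.1, le_trans (le_min ha.2 hb.2) (hordadd a b)⟩
      zero_mem' := ⟨V.zero_mem, by simp [hord0]⟩
      smul_mem' := fun c x hx => ⟨V.smul_mem c hx.1, by
        rcases eq_or_ne c 0 with rfl | hc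
        · simp [hord0]
        · rw [hordc c x hc]; exact hx.2⟩ }
  have hKsub : (K : Set H) = (V : Set H) ∩ {x : H | ((m + 1 : ℕ) : ℕ∞) ≤ ord x} := rfl
  have hKclosed : IsClosed (K : Set H) := by
    rw [hKsub]; exact hVc.inter (hlevel (m + 1))
  haveI : CompleteSpace K := hKclosed.completeSpace_coe
  set p : H := (K.orthogonalProjectionOnto u : H) with hp_def
  have hpK : p ∈ K := (K.orthogonalProjectionOnto u).2
  set w : H := u - p with hw_def
  -- w belongs to the valuation homogeneous component W_m of V
  have hmle : (m : ℕ∞) ≤ ((m + 1 : ℕ) : ℕ∞) := by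
    exact_mod_cast Nat.le_succ m
  have hwV : w ∈ valHom ord (V : Set H) m := by
    refine ⟨⟨V.sub_mem huV hpK.1, ?_⟩, ?_⟩
    · exact le_trans (le_min hordu (le_trans hmle hpK.2)) (hordsub u p)
    · intro g' hg'
      have hg'K : g' ∈ K := ⟨hg'.1, hg'.2⟩
      have := K.starProjection_inner_eq_zero u g' hg'K
      exact inner_eq_zero_symm.mp this
  -- facts about P m
  have ha : P m u ∈ valHom ord (Set.univ : Set H) m := (hP m u).1
  have horthu : ∀ y ∈ valHom ord (Set.univ : Set H) m, (inner ℂ y (u - P m u) : ℂ) = 0 :=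
    (hP m u).2
  have hb : P m w ∈ valHom ord (Set.univ : Set H) m := (hP m w).1
  have horthw : ∀ y ∈ valHom ord (Set.univ : Set H) m, (inner ℂ y (w - P m w) : ℂ) = 0 :=
    (hP m w).2
  -- u - P m w is orthogonal to H_m
  have hub : ∀ y ∈ valHom ord (Set.univ : Set H) m, (inner ℂ y (u - P m w) : ℂ) = 0 := by
    intro y hy
    have h1 : (inner ℂ y (w - P m w) : ℂ) = 0 := horthw y hy
    have h2 : (inner ℂ y p : ℂ) = 0 := by
      have hpS : p ∈ valSub ord (Set.univ : Set H) (m + 1) := ⟨trivial, hpK.2⟩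
      exact inner_eq_zero_symm.mp (hy.2 p hpS)
    have heq : u - P m w = p + (w - P m w) := by
      rw [hw_def]; abel
    rw [heq, inner_add_right, h1, h2, add_zero]
  -- the difference P m u - P m w lies in H_m
  have hd : P m u - P m w ∈ valHom ord (Set.univ : Set H) m := by
    refine ⟨⟨trivial, le_trans (le_min ha.1.2 hb.1.2) (hordsub _ _)⟩, ?_⟩
    intro g' hg'
    rw [inner_sub_right, ha.2 g' hg', hb.2 g' hg', sub_zero]
  -- uniqueness: P m u = P m w
  have e1 : (inner ℂ (P m u - P m w) (u - P m u) : ℂ) = 0 := horthu _ hd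
  have e2 : (inner ℂ (P m u - P m w) (u - P m w) : ℂ) = 0 := hub _ hd
  have hzero : (inner ℂ (P m u - P m w) (P m u - P m w) : ℂ) = 0 := by
    have heq : P m u - P m w = (u - P m w) - (u - P m u) := by abel
    rw [show (inner ℂ (P m u - P m w) (P m u - P m w) : ℂ)
        = inner ℂ (P m u - P m w) ((u - P m w) - (u - P m u)) from by rw [← heq],
      inner_sub_right, e1, e2, sub_zero]
  have hab : P m u = P m w := by
    have : P m u - P m w = 0 := inner_self_eq_zero.mp hzero
    exact sub_eq_zero.mp this
  exact ⟨w, hwV, hab.symm⟩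
end
end

section
/- Let V be a closed subspace of ℍ with valuation homogeneous components W_k. Then the closure of the linear span of ⋃_{k ∈ ℕ} W_k equals V; equivalently, if h ∈ V is orthogonal to W_k for every k ∈ ℕ, then h = 0. -/
noncomputable section

/-- The valuation homogeneous decomposition of a closed subspace `V` spans `V`: the
closure of the linear span of `⋃ k, W_k` equals `V`; equivalently, any `h ∈ V`
orthogonal to every `W_k` is `0`. -/
theorem valHom_decomposition_spans
    {R H : Type*} [CommRing R] [Algebra ℂ R]
    [NormedAddCommGroup H] [InnerProductSpace ℂ H] [CompleteSpace H]
    [Module R H] [SMulCommClass ℂ R H] [IsScalarTower ℂ R H]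
    (ordR : R → ℕ∞) (ord : H → ℕ∞)
    (hordRunit : ∀ r : R, IsUnit r → ordR r = 0)
    (hordRtop : ∀ r : R, ordR r = ⊤ ↔ r = 0)
    (hordRmul : ∀ r s : R, ordR r + ordR s ≤ ordR (r * s))
    (hordRsmul : ∀ (c : ℂ) (r : R), c ≠ 0 → ordR (c • r) = ordR r)
    (hordRadd : ∀ r s : R, min (ordR r) (ordR s) ≤ ordR (r + s))
    (hordtop : ∀ h : H, ord h = ⊤ ↔ h = 0)
    (hordsmul : ∀ (r : R) (h : H), ordR r + ord h ≤ ord (r • h))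
    (hordc : ∀ (c : ℂ) (h : H), c ≠ 0 → ord (c • h) = ord h)
    (hordadd : ∀ h₁ h₂ : H, min (ord h₁) (ord h₂) ≤ ord (h₁ + h₂))
    (hordusc : ∀ (u : ℕ → H) (h : H), Filter.Tendsto u Filter.atTop (nhds h) →
      Filter.limsup (fun j => ord (u j)) Filter.atTop ≤ ord h)
    (hsmulcont : ∀ r : R, Continuous fun h : H => r • h)
    (V : Submodule ℂ H) (hVc : IsClosed (V : Set H)) :
    closure ((Submodule.span ℂ (⋃ k : ℕ, valHom ord (V : Set H) k) : Submodule ℂ H) : Set H)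
        = (V : Set H) ∧
      ∀ h ∈ V, (∀ (k : ℕ), ∀ w ∈ valHom ord (V : Set H) k, (inner ℂ w h : ℂ) = 0) → h = 0 := by
  classical
  -- The valuation subspaces as submodules
  have hzero : ord (0 : H) = ⊤ := (hordtop 0).mpr rfl
  let Vk : ℕ → Submodule ℂ H := fun k =>
    { carrier := valSub ord (V : Set H) k
      add_mem' := by
        rintro a b ⟨haV, hak⟩ ⟨hbV, hbk⟩
        exact ⟨V.add_mem haV hbV, le_trans (le_min hak hbk) (hordadd a b)⟩
      zero_mem' := ⟨V.zero_mem, by rw [hzero]; exact le_top⟩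
      smul_mem' := by
        rintro c x ⟨hxV, hxk⟩
        refine ⟨V.smul_mem c hxV, ?_⟩
        rcases eq_or_ne c 0 with rfl | hc
        · rw [zero_smul, hzero]; exact le_top
        · rw [hordc c x hc]; exact hxk }
  have hVkc : ∀ k : ℕ, IsClosed ((Vk k : Submodule ℂ H) : Set H) := by
    intro k
    have : IsSeqClosed ((Vk k : Submodule ℂ H) : Set H) := by
      intro u h hu hlim
      refine ⟨hVc.isSeqClosed (fun j => (hu j).1) hlim, ?_⟩
      refine le_trans ?_ (hordusc u h hlim)
      exact Filter.le_limsup_of_frequently_le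
        (Filter.Frequently.of_forall fun j => (hu j).2)
    exact this.isClosed
  have hVkmono : ∀ k : ℕ, (Vk (k + 1) : Submodule ℂ H) ≤ Vk k := by
    rintro k x ⟨hxV, hxk⟩
    exact ⟨hxV, le_trans (by exact_mod_cast Nat.le_succ k) hxk⟩
  -- Part 2: the key orthogonality statement
  have key : ∀ h ∈ V, (∀ (k : ℕ), ∀ w ∈ valHom ord (V : Set H) k,
      (inner ℂ w h : ℂ) = 0) → h = 0 := by
    intro h hhV horth
    by_contra hne
    have hne' : ord h ≠ ⊤ := fun ht => hne ((hordtop h).mp ht)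
    obtain ⟨n, hn⟩ := WithTop.ne_top_iff_exists.mp hne'
    haveI : CompleteSpace (Vk (n + 1)) := (hVkc (n + 1)).completeSpace_coe
    set p : H := ((Vk (n + 1)).orthogonalProjectionOnto h : H) with hp
    have hpmem : p ∈ Vk (n + 1) := ((Vk (n + 1)).orthogonalProjectionOnto h).2
    have hw : h - p ∈ (Vk (n + 1))ᗮ := Submodule.sub_starProjection_mem_orthogonal h
    have hhVn : h ∈ Vk n := ⟨hhV, le_of_eq hn⟩
    have hwhom : (h - p) ∈ valHom ord (V : Set H) n := by
      refine ⟨(Vk n).sub_mem hhVn (hVkmono n hpmem), ?_⟩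
      intro g hg
      exact (Submodule.mem_orthogonal _ _).mp hw g hg
    have h0 : (inner ℂ (h - p) h : ℂ) = 0 := horth n _ hwhom
    have hpw : (inner ℂ p (h - p) : ℂ) = 0 :=
      (Submodule.mem_orthogonal _ _).mp hw p hpmem
    have hwp : (inner ℂ (h - p) p : ℂ) = 0 := by
      rw [← inner_conj_symm, hpw, map_zero]
    have hself : (inner ℂ (h - p) (h - p) : ℂ) = 0 := by
      rw [inner_sub_right, h0, hwp, sub_zero]
    have hhp : h - p = 0 := inner_self_eq_zero.mp hself
    have hhmem : h ∈ Vk (n + 1) := by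
      have : h = p := by rw [← sub_eq_zero]; exact hhp
      rw [this]; exact hpmem
    have hord1 : ((n + 1 : ℕ) : ℕ∞) ≤ ord h := hhmem.2
    rw [← hn] at hord1
    have : n + 1 ≤ n := Nat.cast_le.mp hord1
    omega
  refine ⟨?_, key⟩
  -- Part 1
  set M : Submodule ℂ H :=
    (Submodule.span ℂ (⋃ k : ℕ, valHom ord (V : Set H) k)).topologicalClosure with hM
  have hspanle : Submodule.span ℂ (⋃ k : ℕ, valHom ord (V : Set H) k) ≤ V := by
    rw [Submodule.span_le]
    rintro x hx
    obtain ⟨s, ⟨k, rfl⟩, hxs⟩ := hx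
    exact hxs.1.1
  have hMV : M ≤ V := Submodule.topologicalClosure_minimal _ hspanle hVc
  haveI : CompleteSpace M :=
    (Submodule.isClosed_topologicalClosure _).completeSpace_coe
  have hVM : (V : Set H) ⊆ (M : Set H) := by
    intro h hh
    set q : H := (M.orthogonalProjectionOnto h : H) with hq
    have hqmem : q ∈ M := (M.orthogonalProjectionOnto h).2
    have hw : h - q ∈ Mᗮ := Submodule.sub_starProjection_mem_orthogonal h
    have hsub : h - q ∈ V := V.sub_mem hh (hMV hqmem)
    have horth : ∀ (k : ℕ), ∀ w ∈ valHom ord (V : Set H) k,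
        (inner ℂ w (h - q) : ℂ) = 0 := by
      intro k w hwk
      have hwM : w ∈ M := by
        apply Submodule.le_topologicalClosure
        exact Submodule.subset_span (Set.mem_iUnion.mpr ⟨k, hwk⟩)
      exact (Submodule.mem_orthogonal _ _).mp hw w hwM
    have := key (h - q) hsub horth
    have : h = q := by rw [← sub_eq_zero]; exact this
    rw [this]; exact hqmem
  have hcoe : closure ((Submodule.span ℂ (⋃ k : ℕ,
      valHom ord (V : Set H) k) : Submodule ℂ H) : Set H) = (M : Set H) :=
    (Submodule.topologicalClosure_coe _).symm
  rw [hcoe]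
  exact Set.Subset.antisymm hMV hVM
end
end

section
/- (Upper semicontinuity of the order of vanishing.) Let U ⊆ ℂ be open, a ∈ U, and let f and f_j (j ∈ ℕ) be analytic functions on U such that f_j → f uniformly on every compact subset of U. Then limsup_j ord_a(f_j) ≤ ord_a(f) in ℕ∞. -/
open Filter FormalMultilinearSeries

private lemma my_iteratedDeriv_eq {f : ℂ → ℂ} {p : FormalMultilinearSeries ℂ ℂ ℂ} {a : ℂ}
    (hp : HasFPowerSeriesAt f p a) (n : ℕ) :
    iteratedDeriv n f a = Nat.factorial n • p.coeff n := by
  obtain ⟨r, hr⟩ := hp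
  have h := hr.factorial_smul (1 : ℂ) n
  rw [iteratedDeriv_eq_iteratedFDeriv, ← h]
  rfl

private lemma my_order_eq_order {f : ℂ → ℂ} {p : FormalMultilinearSeries ℂ ℂ ℂ} {a : ℂ}
    (hf : AnalyticAt ℂ f a) (hp : HasFPowerSeriesAt f p a) (hne : p ≠ 0) :
    analyticOrderAt f a = p.order := by
  rw [hf.analyticOrderAt_eq_natCast]
  exact ⟨_, ⟨_, hp.has_fpower_series_iterate_dslope_fslope p.order⟩,
    hp.iterate_dslope_fslope_ne_zero hne, Filter.Eventually.of_forall hp.eq_pow_order_mul_iterate_dslope⟩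

private lemma my_iteratedDeriv_ne_zero {f : ℂ → ℂ} {a : ℂ}
    (hf : AnalyticAt ℂ f a) {n : ℕ} (h : analyticOrderAt f a = n) : iteratedDeriv n f a ≠ 0 := by
  obtain ⟨p, hp⟩ := id hf
  have hne : p ≠ 0 := by
    intro h0
    rw [analyticOrderAt_eq_top.mpr (hp.locally_zero_iff.mpr h0)] at h
    exact (ENat.top_ne_coe n) h
  have ho := my_order_eq_order hf hp hne
  rw [h] at ho
  have hpo : p.order = n := by exact_mod_cast ho.symm
  have hcoeff : p.coeff n ≠ 0 := by
    rw [← hpo]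
    simpa [FormalMultilinearSeries.coeff_eq_zero] using p.apply_order_ne_zero hne
  rw [my_iteratedDeriv_eq hp n]
  exact smul_ne_zero n.factorial_ne_zero hcoeff

private lemma my_order_le {f : ℂ → ℂ} {a : ℂ}
    (hf : AnalyticAt ℂ f a) {n : ℕ} (h : iteratedDeriv n f a ≠ 0) : analyticOrderAt f a ≤ n := by
  obtain ⟨p, hp⟩ := id hf
  rw [my_iteratedDeriv_eq hp n] at h
  have hcoeff : p.coeff n ≠ 0 := fun h0 => h (by simp [h0])
  have hpn : p n ≠ 0 := by
    rwa [ne_eq, ← FormalMultilinearSeries.coeff_eq_zero]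
  have hne : p ≠ 0 := fun h0 => hpn (by simp [h0])
  rw [my_order_eq_order hf hp hne]
  exact_mod_cast Nat.cast_le.mpr (Nat.sInf_le hpn)

private lemma my_tlu_iteratedDeriv (n : ℕ) {F : ℕ → ℂ → ℂ} {f : ℂ → ℂ} {U : Set ℂ}
    (hU : IsOpen U) (hF : ∀ j, AnalyticOnNhd ℂ (F j) U)
    (h : TendstoLocallyUniformlyOn F f atTop U) :
    TendstoLocallyUniformlyOn (fun j => iteratedDeriv n (F j)) (iteratedDeriv n f) atTop U := by
  induction n generalizing F f with
  | zero => simpa using h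
  | succ n ih =>
    have h' : TendstoLocallyUniformlyOn (fun j => deriv (F j)) (deriv f) atTop U :=
      h.deriv (Filter.Eventually.of_forall fun j => (hF j).differentiableOn) hU
    have := ih (fun j => (hF j).deriv) h'
    simpa [iteratedDeriv_succ'] using this

/-- **Upper semicontinuity of the order of vanishing.**  If `f` and the `f j` are
analytic on an open set `U ⊆ ℂ`, `a ∈ U`, and `f j → f` uniformly on every compact
subset of `U`, then `limsup_j ord_a (f j) ≤ ord_a f` in `ℕ∞`. -/
theorem limsup_order_le_order
    (U : Set ℂ) (hU : IsOpen U) (a : ℂ) (ha : a ∈ U)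
    (f : ℂ → ℂ) (fj : ℕ → ℂ → ℂ)
    (hf : ∀ z ∈ U, AnalyticAt ℂ f z)
    (hfj : ∀ j : ℕ, ∀ z ∈ U, AnalyticAt ℂ (fj j) z)
    (hconv : ∀ K ⊆ U, IsCompact K → TendstoUniformlyOn fj f Filter.atTop K) :
    Filter.limsup (fun j => analyticOrderAt (fj j) a) Filter.atTop ≤ analyticOrderAt f a := by
  by_cases htop : analyticOrderAt f a = ⊤
  · rw [htop]; exact le_top
  · lift analyticOrderAt f a to ℕ using htop with n hn
    have htlu : TendstoLocallyUniformlyOn fj f atTop U :=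
      (tendstoLocallyUniformlyOn_iff_forall_isCompact hU).mpr fun K hK hK' => hconv K hK hK'
    have h2 := my_tlu_iteratedDeriv n hU (fun j z hz => hfj j z hz) htlu
    have hne : iteratedDeriv n f a ≠ 0 := my_iteratedDeriv_ne_zero (hf a ha) hn.symm
    have hev : ∀ᶠ j in atTop, iteratedDeriv n (fj j) a ≠ 0 :=
      (h2.tendsto_at ha).eventually_ne hne
    refine Filter.limsup_le_of_le (by isBoundedDefault) ?_
    filter_upwards [hev] with j hj
    exact my_order_le (hfj j a ha) hj
end

section
/- Suppose in addition that R = ℂ[X] is the polynomial algebra in one variable with ord_R(p) equal to the multiplicity of 0 as a root of p (and ord_R(0) = ∞), that ℍ satisfies the minimum value property, and that ℍ is singly generated, i.e., dim_ℂ H_m ≤ 1 for every m ∈ ℕ. Let V be a nonzero closed R₁ invariant subspace of ℍ, let k be the least index with W_k ≠ {0}, and suppose V = V_k. Let M be the orthogonal complement in V of the closure of X•V = {X•h : h ∈ V}. If dim_ℂ M ≥ 2, then the closure of X•V is a proper subspace of V_{k+1}. -/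
noncomputable section

/-- Suppose `R = ℂ[X]` with `ord_R p` the multiplicity of `0` as a root of `p`, `ℍ`
satisfies the minimum value property, and `ℍ` is singly generated (`dim_ℂ H_m ≤ 1` for
all `m`).  If `V` is a nonzero closed `R₁` invariant subspace, `k` the least index with
`W_k ≠ {0}`, `V = V_k`, and the orthogonal complement `M` of the closure of `X • V` in
`V` has dimension `≥ 2`, then the closure of `X • V` is a proper subspace of `V_{k+1}`. -/
theorem closure_X_smul_ssubset
    {H : Type*}
    [NormedAddCommGroup H] [InnerProductSpace ℂ H] [CompleteSpace H]
    [Module (Polynomial ℂ) H] [SMulCommClass ℂ (Polynomial ℂ) H]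
    [IsScalarTower ℂ (Polynomial ℂ) H]
    (ordR : Polynomial ℂ → ℕ∞) (ord : H → ℕ∞)
    (hordRX : ∀ p : Polynomial ℂ, p ≠ 0 → ordR p = (p.rootMultiplicity 0 : ℕ∞))
    (hordRunit : ∀ r : Polynomial ℂ, IsUnit r → ordR r = 0)
    (hordRtop : ∀ r : Polynomial ℂ, ordR r = ⊤ ↔ r = 0)
    (hordRmul : ∀ r s : Polynomial ℂ, ordR r + ordR s ≤ ordR (r * s))
    (hordRsmul : ∀ (c : ℂ) (r : Polynomial ℂ), c ≠ 0 → ordR (c • r) = ordR r)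
    (hordRadd : ∀ r s : Polynomial ℂ, min (ordR r) (ordR s) ≤ ordR (r + s))
    (hordtop : ∀ h : H, ord h = ⊤ ↔ h = 0)
    (hordsmul : ∀ (r : Polynomial ℂ) (h : H), ordR r + ord h ≤ ord (r • h))
    (hordc : ∀ (c : ℂ) (h : H), c ≠ 0 → ord (c • h) = ord h)
    (hordadd : ∀ h₁ h₂ : H, min (ord h₁) (ord h₂) ≤ ord (h₁ + h₂))
    (hordusc : ∀ (u : ℕ → H) (h : H), Filter.Tendsto u Filter.atTop (nhds h) →
      Filter.limsup (fun j => ord (u j)) Filter.atTop ≤ ord h)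
    (hsmulcont : ∀ r : Polynomial ℂ, Continuous fun h : H => r • h)
    (P : ℕ → H → H)
    (hP : ∀ m : ℕ, IsOrthProjOnto (valHom ord (Set.univ : Set H) m) (P m))
    (hmin : MinValProp ord P)
    (hsingle : ∀ m : ℕ, ∀ x ∈ valHom ord (Set.univ : Set H) m,
      ∀ y ∈ valHom ord (Set.univ : Set H) m,
        ∃ a b : ℂ, (a ≠ 0 ∨ b ≠ 0) ∧ a • x + b • y = 0)
    (V : Submodule ℂ H) (hVc : IsClosed (V : Set H)) (hVne : V ≠ ⊥)
    (hinv : R1Invariant ordR (V : Set H))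
    (k : ℕ)
    (hk : ∃ x ∈ valHom ord (V : Set H) k, x ≠ 0)
    (hkleast : ∀ j < k, ∀ x ∈ valHom ord (V : Set H) j, x = 0)
    (hVeq : (V : Set H) = valSub ord (V : Set H) k)
    (x y : H)
    (hxV : x ∈ V)
    (hxM : ∀ g ∈ closure ((fun h : H => (Polynomial.X : Polynomial ℂ) • h) '' (V : Set H)),
      (inner ℂ g x : ℂ) = 0)
    (hyV : y ∈ V)
    (hyM : ∀ g ∈ closure ((fun h : H => (Polynomial.X : Polynomial ℂ) • h) '' (V : Set H)),
      (inner ℂ g y : ℂ) = 0)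
    (hxy : ∀ a b : ℂ, a • x + b • y = 0 → a = 0 ∧ b = 0) :
    closure ((fun h : H => (Polynomial.X : Polynomial ℂ) • h) '' (V : Set H))
      ⊂ valSub ord (V : Set H) (k + 1) := by

  classical
  set C := closure ((fun h : H => (Polynomial.X : Polynomial ℂ) • h) '' (V : Set H)) with hC
  -- ordR X ≥ 1
  have hXmul : (Polynomial.X : Polynomial ℂ).rootMultiplicity 0 = 1 := by
    simpa using Polynomial.rootMultiplicity_X_sub_C_self (x := (0 : ℂ))
  have hXord : (1 : ℕ∞) ≤ ordR Polynomial.X := by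
    rw [hordRX Polynomial.X Polynomial.X_ne_zero, hXmul]; exact_mod_cast le_refl 1
  -- the image is inside valSub (k+1)
  have hsubset : ((fun h : H => (Polynomial.X : Polynomial ℂ) • h) '' (V : Set H))
      ⊆ valSub ord (V : Set H) (k + 1) := by
    rintro _ ⟨h, hh, rfl⟩
    have hh' : h ∈ valSub ord (V : Set H) k := by
      have : h ∈ (V : Set H) := hh
      rwa [hVeq] at this
    refine ⟨hinv _ hXord h hh, ?_⟩
    calc ((k + 1 : ℕ) : ℕ∞) = 1 + (k : ℕ∞) := by push_cast; ring
      _ ≤ ordR Polynomial.X + ord h := add_le_add hXord hh'.2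
      _ ≤ ord (Polynomial.X • h) := hordsmul _ _
  -- valSub (k+1) is closed
  have hclosed : IsClosed (valSub ord (V : Set H) (k + 1)) := by
    apply IsSeqClosed.isClosed
    intro u p hu hup
    refine ⟨hVc.mem_of_tendsto hup (Filter.Eventually.of_forall fun n => (hu n).1), ?_⟩
    refine le_trans ?_ (hordusc u p hup)
    rw [Filter.limsup_eq]
    refine le_sInf fun a ha => ?_
    obtain ⟨j, hj⟩ := ha.exists
    exact le_trans (hu j).2 hj
  have hcl : C ⊆ valSub ord (V : Set H) (k + 1) := closure_minimal hsubset hclosed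
  refine HasSubset.Subset.ssubset_of_ne hcl ?_
  intro heq
  have hsub : valSub ord (V : Set H) (k + 1) ⊆ C := heq ▸ Set.Subset.rfl
  -- x and y are nonzero
  have hx0 : x ≠ 0 := by
    intro h
    exact one_ne_zero ((hxy 1 0 (by simp [h])).1)
  have hy0 : y ≠ 0 := by
    intro h
    exact one_ne_zero ((hxy 0 1 (by simp [h])).2)
  -- ord x = k, ord y = k
  have key : ∀ w : H, w ∈ V → w ≠ 0 →
      (∀ g ∈ C, (inner ℂ g w : ℂ) = 0) → P k w ≠ 0 := by
    intro w hwV hw0 hwM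
    have hws : w ∈ valSub ord (V : Set H) k := by
      have : w ∈ (V : Set H) := hwV
      rwa [hVeq] at this
    have hordle : ord w ≤ (k : ℕ∞) := by
      by_contra hlt
      have h1 : ((k + 1 : ℕ) : ℕ∞) ≤ ord w := by
        push_cast
        exact Order.add_one_le_of_lt (not_le.mp hlt)
      have hwC : w ∈ C := hsub ⟨hwV, h1⟩
      exact hw0 (inner_self_eq_zero.mp (hwM w hwC))
    obtain ⟨kw, hPkw, _, how⟩ := hmin w hw0
    have : (kw : ℕ∞) = (k : ℕ∞) := le_antisymm (how ▸ hordle) (how ▸ hws.2)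
    have : kw = k := by exact_mod_cast this
    rwa [this] at hPkw
  have hPkx : P k x ≠ 0 := key x hxV hx0 hxM
  have hPky : P k y ≠ 0 := key y hyV hy0 hyM
  -- single generation: get a,b
  obtain ⟨a, b, hab, habsum⟩ := hsingle k (P k x) (hP k x).1 (P k y) (hP k y).1
  set z : H := a • x + b • y with hz
  have hzV : z ∈ V := V.add_mem (V.smul_mem a hxV) (V.smul_mem b hyV)
  have hz0 : z = 0 := by
    by_contra hzne
    -- z is orthogonal to valHom univ k
    have hperpz : ∀ g ∈ valHom ord (Set.univ : Set H) k, (inner ℂ g z : ℂ) = 0 := by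
      intro g hg
      have h1 : (inner ℂ g (x - P k x) : ℂ) = 0 := (hP k x).2 g hg
      have h2 : (inner ℂ g (y - P k y) : ℂ) = 0 := (hP k y).2 g hg
      have h3 : (inner ℂ g (a • P k x + b • P k y) : ℂ) = 0 := by
        rw [habsum, inner_zero_right]
      have hzd : z = a • (x - P k x) + b • (y - P k y) + (a • P k x + b • P k y) := by
        rw [hz]; module
      rw [hzd, inner_add_right, inner_add_right, inner_smul_right, inner_smul_right,
        h1, h2, h3]
      ring
    -- hence P k z = 0
    have hPkz : P k z = 0 := by
      have h4 := (hP k z).2 (P k z) (hP k z).1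
      have h5 := hperpz (P k z) (hP k z).1
      rw [inner_sub_right, h5, zero_sub, neg_eq_zero] at h4
      exact inner_self_eq_zero.mp h4
    obtain ⟨kz, hPkzne, _, hoz⟩ := hmin z hzne
    have hzs : z ∈ valSub ord (V : Set H) k := by
      have : z ∈ (V : Set H) := hzV
      rwa [hVeq] at this
    have hkkz : k ≤ kz := by exact_mod_cast hoz ▸ hzs.2
    have hkznek : kz ≠ k := fun h => hPkzne (h ▸ hPkz)
    have hk1 : ((k + 1 : ℕ) : ℕ∞) ≤ ord z := by
      rw [hoz]
      exact_mod_cast Nat.succ_le_of_lt (lt_of_le_of_ne hkkz (Ne.symm hkznek))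
    have hzC : z ∈ C := hsub ⟨hzV, hk1⟩
    have hix : (inner ℂ z x : ℂ) = 0 := hxM z hzC
    have hiy : (inner ℂ z y : ℂ) = 0 := hyM z hzC
    have : (inner ℂ z z : ℂ) = 0 := by
      rw [hz, inner_add_right, inner_smul_right, inner_smul_right, hix, hiy]
      ring
    exact hzne (inner_self_eq_zero.mp this)
  obtain ⟨ha0, hb0⟩ := hxy a b hz0
  rcases hab with h | h <;> exact h (by assumption)
end
end
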